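/- arXiv:2411.05740 — 10 statements merged into one kernel-verified Lean document; each statement's English description precedes it below -/
import Mathlib

section
/- (Proposition 1: data-based characterization of the closed-loop dynamics.) Suppose G_x, G_r, G_v ∈ ℝ^{(m+n)×n} satisfy Σ·G_x = [K_x; I_n], Σ·G_r = [K_r; 0_{n×n}], and Σ·G_v = [K_x; 0_{n×n}] (vertical block matrices with top block m×n and bottom block n×n), for some K_x, K_r ∈ ℝ^{m×n}. Let xᵒ(t), r(t), v(t) ∈ ℝⁿ be vectors, set x(t) := xᵒ(t) + v(t) and apply the control input u(t) := K_x·x(t) + K_r·r(t), so that the next noise-free state is xᵒ(t+1) := A₀·xᵒ(t) + B₀·u(t). Then xᵒ(t+1) = (X̄₁ + W̄₀)·G_x·xᵒ(t) + (X̄₁ + W̄₀)·G_r·r(t) + (X̄₁ + W̄₀)·G_v·v(t). -/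
open Matrix

/-- Proposition 1: data-based characterization of the closed-loop dynamics. -/
theorem stmt_1 (n m T : ℕ) (hT : 1 ≤ T)
    (A₀ : Matrix (Fin n) (Fin n) ℝ) (B₀ : Matrix (Fin n) (Fin m) ℝ)
    (U₀ : Matrix (Fin m) (Fin T) ℝ) (X₀o V₀ V₁ : Matrix (Fin n) (Fin T) ℝ)
    (Kx Kr : Matrix (Fin m) (Fin n) ℝ)
    (Gx Gr Gv : Matrix (Fin m ⊕ Fin n) (Fin n) ℝ)
    (X₀ : Matrix (Fin n) (Fin T) ℝ) (hX₀ : X₀ = X₀o + V₀)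
    (X₁ : Matrix (Fin n) (Fin T) ℝ) (hX₁ : X₁ = A₀ * X₀o + B₀ * U₀ + V₁)
    (Φ : Matrix (Fin m ⊕ Fin n) (Fin T) ℝ) (hΦ : Φ = fromRows U₀ X₀)
    (Sig : Matrix (Fin m ⊕ Fin n) (Fin m ⊕ Fin n) ℝ) (hSig : Sig = (T : ℝ)⁻¹ • (Φ * Φᵀ))
    (X₁bar : Matrix (Fin n) (Fin m ⊕ Fin n) ℝ) (hX₁bar : X₁bar = (T : ℝ)⁻¹ • (X₁ * Φᵀ))
    (V₀bar : Matrix (Fin n) (Fin m ⊕ Fin n) ℝ) (hV₀bar : V₀bar = (T : ℝ)⁻¹ • (V₀ * Φᵀ))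
    (V₁bar : Matrix (Fin n) (Fin m ⊕ Fin n) ℝ) (hV₁bar : V₁bar = (T : ℝ)⁻¹ • (V₁ * Φᵀ))
    (W₀bar : Matrix (Fin n) (Fin m ⊕ Fin n) ℝ) (hW₀bar : W₀bar = A₀ * V₀bar - V₁bar)
    (hGx : Sig * Gx = fromRows Kx (1 : Matrix (Fin n) (Fin n) ℝ))
    (hGr : Sig * Gr = fromRows Kr (0 : Matrix (Fin n) (Fin n) ℝ))
    (hGv : Sig * Gv = fromRows Kx (0 : Matrix (Fin n) (Fin n) ℝ))
    -- current state, reference and noise vectors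
    (xo r v : Fin n → ℝ)
    -- measured state, control input and next noise-free state
    (x : Fin n → ℝ) (hx : x = xo + v)
    (u : Fin m → ℝ) (hu : u = Kx.mulVec x + Kr.mulVec r)
    (xnext : Fin n → ℝ) (hxnext : xnext = A₀.mulVec xo + B₀.mulVec u) :
    xnext = ((X₁bar + W₀bar) * Gx).mulVec xo + ((X₁bar + W₀bar) * Gr).mulVec r
      + ((X₁bar + W₀bar) * Gv).mulVec v := by
  have key : X₁bar + W₀bar = fromCols B₀ A₀ * Sig := by
    subst hW₀bar hX₁bar hV₀bar hV₁bar hSig hX₁ hX₀ hΦ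
    simp only [Matrix.mul_smul, Matrix.smul_mul, ← Matrix.mul_assoc,
      fromCols_mul_fromRows, ← smul_add, ← smul_sub]
    congr 1
    simp only [Matrix.add_mul, Matrix.mul_add, neg_one_smul]
    abel
  have hBK : ∀ (G : Matrix (Fin m ⊕ Fin n) (Fin n) ℝ) (K : Matrix (Fin m) (Fin n) ℝ)
      (M : Matrix (Fin n) (Fin n) ℝ), Sig * G = fromRows K M →
      (X₁bar + W₀bar) * G = B₀ * K + A₀ * M := by
    intro G K M h
    rw [key, Matrix.mul_assoc, h, fromCols_mul_fromRows]
  rw [hBK Gx Kx 1 hGx, hBK Gr Kr 0 hGr, hBK Gv Kx 0 hGv, hxnext, hu, hx]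
  simp [Matrix.add_mulVec, Matrix.mulVec_add, ← Matrix.mulVec_mulVec]
  abel
end

section
/- (Theorem 1, sufficiency.) Suppose G_x, G_r ∈ ℝ^{(m+n)×n} satisfy the data-driven matching conditions X̄₁ᵒ·G_x = A_M, X̄₁ᵒ·G_r = B_M, X̄₀ᵒ·G_x = I_n, and X̄₀ᵒ·G_r = 0_{n×n}. Then the controller gain matrices K_x := Ū₀·G_x ∈ ℝ^{m×n} and K_r := Ū₀·G_r ∈ ℝ^{m×n} solve the model-reference matching problem: A₀ + B₀·K_x = A_M and B₀·K_r = B_M. -/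
open Matrix

/-- Theorem 1 (sufficiency): if `Gx, Gr` satisfy the data-driven matching conditions,
then the controller gains `Kx = Ū₀ Gx`, `Kr = Ū₀ Gr` solve the matching problem. -/
theorem stmt_2 (n m T : ℕ) (hT : 1 ≤ T)
    (A₀ : Matrix (Fin n) (Fin n) ℝ) (B₀ : Matrix (Fin n) (Fin m) ℝ)
    (U₀ : Matrix (Fin m) (Fin T) ℝ) (X₀o : Matrix (Fin n) (Fin T) ℝ)
    (A_M B_M : Matrix (Fin n) (Fin n) ℝ)
    (X₁o : Matrix (Fin n) (Fin T) ℝ) (hX₁o : X₁o = A₀ * X₀o + B₀ * U₀)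
    (Φo : Matrix (Fin m ⊕ Fin n) (Fin T) ℝ) (hΦo : Φo = fromRows U₀ X₀o)
    (U₀bar : Matrix (Fin m) (Fin m ⊕ Fin n) ℝ) (hU₀bar : U₀bar = (T : ℝ)⁻¹ • (U₀ * Φoᵀ))
    (X₀obar : Matrix (Fin n) (Fin m ⊕ Fin n) ℝ) (hX₀obar : X₀obar = (T : ℝ)⁻¹ • (X₀o * Φoᵀ))
    (X₁obar : Matrix (Fin n) (Fin m ⊕ Fin n) ℝ) (hX₁obar : X₁obar = (T : ℝ)⁻¹ • (X₁o * Φoᵀ))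
    (Gx Gr : Matrix (Fin m ⊕ Fin n) (Fin n) ℝ)
    (h1 : X₁obar * Gx = A_M) (h2 : X₁obar * Gr = B_M)
    (h3 : X₀obar * Gx = (1 : Matrix (Fin n) (Fin n) ℝ))
    (h4 : X₀obar * Gr = (0 : Matrix (Fin n) (Fin n) ℝ)) :
    A₀ + B₀ * (U₀bar * Gx) = A_M ∧ B₀ * (U₀bar * Gr) = B_M := by
  have key : X₁obar = A₀ * X₀obar + B₀ * U₀bar := by
    subst hX₁obar hX₀obar hU₀bar hX₁o
    rw [Matrix.add_mul, smul_add, Matrix.mul_smul, Matrix.mul_smul, Matrix.mul_assoc,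
      Matrix.mul_assoc]
  constructor
  · calc A₀ + B₀ * (U₀bar * Gx)
        = A₀ * (X₀obar * Gx) + B₀ * (U₀bar * Gx) := by rw [h3, mul_one]
      _ = X₁obar * Gx := by rw [key, Matrix.add_mul, Matrix.mul_assoc, Matrix.mul_assoc]
      _ = A_M := h1
  · calc B₀ * (U₀bar * Gr)
        = A₀ * (X₀obar * Gr) + B₀ * (U₀bar * Gr) := by rw [h4, mul_zero, zero_add]
      _ = X₁obar * Gr := by rw [key, Matrix.add_mul, Matrix.mul_assoc, Matrix.mul_assoc]
      _ = B_M := h2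
end

section
/- (Theorem 1, necessity.) Suppose the sample covariance Σᵒ := (1/T)·Φᵒ·(Φᵒ)ᵀ is invertible, and suppose the model-reference matching problem is feasible, i.e., there exist K_x, K_r ∈ ℝ^{m×n} with A₀ + B₀·K_x = A_M and B₀·K_r = B_M. Then there exist G_x, G_r ∈ ℝ^{(m+n)×n} satisfying the data-driven matching conditions X̄₁ᵒ·G_x = A_M, X̄₁ᵒ·G_r = B_M, X̄₀ᵒ·G_x = I_n, X̄₀ᵒ·G_r = 0_{n×n}, and moreover Ū₀·G_x = K_x and Ū₀·G_r = K_r. -/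
open Matrix

/-- Theorem 1 (necessity): if the sample covariance is invertible and the matching problem
is feasible, then the data-driven matching conditions admit a solution reproducing the gains. -/
theorem stmt_3 (n m T : ℕ) (hT : 1 ≤ T)
    (A₀ : Matrix (Fin n) (Fin n) ℝ) (B₀ : Matrix (Fin n) (Fin m) ℝ)
    (U₀ : Matrix (Fin m) (Fin T) ℝ) (X₀o : Matrix (Fin n) (Fin T) ℝ)
    (A_M B_M : Matrix (Fin n) (Fin n) ℝ)
    (X₁o : Matrix (Fin n) (Fin T) ℝ) (hX₁o : X₁o = A₀ * X₀o + B₀ * U₀)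
    (Φo : Matrix (Fin m ⊕ Fin n) (Fin T) ℝ) (hΦo : Φo = fromRows U₀ X₀o)
    (Sigo : Matrix (Fin m ⊕ Fin n) (Fin m ⊕ Fin n) ℝ) (hSigo : Sigo = (T : ℝ)⁻¹ • (Φo * Φoᵀ))
    (hinv : IsUnit Sigo)
    (U₀bar : Matrix (Fin m) (Fin m ⊕ Fin n) ℝ) (hU₀bar : U₀bar = (T : ℝ)⁻¹ • (U₀ * Φoᵀ))
    (X₀obar : Matrix (Fin n) (Fin m ⊕ Fin n) ℝ) (hX₀obar : X₀obar = (T : ℝ)⁻¹ • (X₀o * Φoᵀ))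
    (X₁obar : Matrix (Fin n) (Fin m ⊕ Fin n) ℝ) (hX₁obar : X₁obar = (T : ℝ)⁻¹ • (X₁o * Φoᵀ))
    (Kx Kr : Matrix (Fin m) (Fin n) ℝ)
    (hmatchA : A₀ + B₀ * Kx = A_M) (hmatchB : B₀ * Kr = B_M) :
    ∃ Gx Gr : Matrix (Fin m ⊕ Fin n) (Fin n) ℝ,
      X₁obar * Gx = A_M ∧ X₁obar * Gr = B_M ∧
      X₀obar * Gx = (1 : Matrix (Fin n) (Fin n) ℝ) ∧
      X₀obar * Gr = (0 : Matrix (Fin n) (Fin n) ℝ) ∧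
      U₀bar * Gx = Kx ∧ U₀bar * Gr = Kr := by

  have hSig : Sigo = fromRows U₀bar X₀obar := by
    rw [hSigo, hΦo, hU₀bar, hX₀obar, fromRows_mul, ← hΦo]
    ext i j
    cases i <;> simp [fromRows_apply_inl, fromRows_apply_inr]
  have hS : Sigo * Sigo⁻¹ = 1 := mul_nonsing_inv _ (isUnit_iff_isUnit_det Sigo |>.mp hinv)
  have key : ∀ K : Matrix (Fin m) (Fin n) ℝ, ∀ M : Matrix (Fin n) (Fin n) ℝ,
      U₀bar * (Sigo⁻¹ * fromRows K M) = K ∧ X₀obar * (Sigo⁻¹ * fromRows K M) = M := by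
    intro K M
    have h : fromRows (U₀bar * (Sigo⁻¹ * fromRows K M)) (X₀obar * (Sigo⁻¹ * fromRows K M))
        = fromRows K M := by
      rw [← fromRows_mul, ← hSig, ← Matrix.mul_assoc, hS, Matrix.one_mul]
    exact (fromRows_inj.eq_iff.mp h)
  obtain ⟨hUx, hXx⟩ := key Kx 1
  obtain ⟨hUr, hXr⟩ := key Kr 0
  have hX1 : X₁obar = A₀ * X₀obar + B₀ * U₀bar := by
    rw [hX₁obar, hX₀obar, hU₀bar, hX₁o, Matrix.add_mul, smul_add, Matrix.mul_smul,
      Matrix.mul_smul, Matrix.mul_assoc, Matrix.mul_assoc]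
  refine ⟨Sigo⁻¹ * fromRows Kx 1, Sigo⁻¹ * fromRows Kr 0, ?_, ?_, hXx, hXr, hUx, hUr⟩
  · rw [hX1, Matrix.add_mul, Matrix.mul_assoc, Matrix.mul_assoc, hXx, hUx, Matrix.mul_one, hmatchA]
  · rw [hX1, Matrix.add_mul, Matrix.mul_assoc, Matrix.mul_assoc, hXr, hUr, Matrix.mul_zero,
      zero_add, hmatchB]
end

section
/- (Proposition 2, part (i): stability of the controller obtained from a feasible SDP solution.) Suppose Q_x ∈ ℝ^{(m+n)×n} and P ∈ ℝ^{n×n} satisfy the consistency constraint X̄₀ᵒ·Q_x = P and the LMI that the 2n×2n block matrix [[P, X̄₁ᵒ·Q_x], [(X̄₁ᵒ·Q_x)ᵀ, P]] is positive definite. Then P is positive definite, the controller gain K_x := Ū₀·Q_x·P⁻¹ yields a closed-loop matrix A_cl := A₀ + B₀·K_x satisfying the Lyapunov inequality that P − A_cl·P·A_clᵀ is positive definite, and consequently the closed loop is stable: A_clᵏ converges to the zero matrix as k → ∞. -/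
open Matrix Filter

lemma aux_posDef_block {n : ℕ} {P S : Matrix (Fin n) (Fin n) ℝ}
    (h : (fromBlocks P S Sᵀ P).PosDef) : P.PosDef := by
  refine Matrix.PosDef.of_dotProduct_mulVec_pos (Matrix.isHermitian_fromBlocks_iff.mp h.1).1 (fun x hx => ?_)
  have hy : (Sum.elim x (0 : Fin n → ℝ)) ≠ 0 := by
    intro hc
    apply hx
    funext i
    exact congrFun hc (Sum.inl i)
  have h2 := h.dotProduct_mulVec_pos hy
  simpa [Matrix.fromBlocks_mulVec, Matrix.mulVec_zero, star_trivial,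
    sumElim_dotProduct_sumElim] using h2

lemma aux_schur {n : ℕ} {P S : Matrix (Fin n) (Fin n) ℝ} (hP : P.PosDef)
    (h : (fromBlocks P S Sᵀ P).PosDef) : (P - S * P⁻¹ * Sᵀ).PosDef := by
  have hdet : IsUnit P.det := isUnit_iff_ne_zero.mpr (ne_of_gt hP.det_pos)
  haveI : Invertible P := P.invertibleOfIsUnitDet hdet
  have hSt : Sᵀ = Sᴴ := (Matrix.conjTranspose_eq_transpose_of_trivial S).symm
  rw [hSt] at h
  refine Matrix.PosDef.of_dotProduct_mulVec_pos ?_ ?_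
  · have := (Matrix.IsHermitian.fromBlocks₂₂ P S hP.1).mp h.1
    rwa [← hSt] at this
  · intro x hx
    have key := Matrix.schur_complement_eq₂₂ P S x (-((P⁻¹ * Sᴴ) *ᵥ x)) hP.1
    have hy : (Sum.elim x (-((P⁻¹ * Sᴴ) *ᵥ x))) ≠ 0 := by
      intro hc
      apply hx
      funext i
      exact congrFun hc (Sum.inl i)
    have h2 := h.dotProduct_mulVec_pos hy
    rw [Matrix.dotProduct_mulVec] at h2
    rw [key] at h2
    simp only [add_neg_cancel, star_trivial] at h2
    rw [Matrix.zero_vecMul, zero_dotProduct, zero_add] at h2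
    rw [Matrix.dotProduct_mulVec, hSt, star_trivial]
    exact h2


lemma aux_lyap_tendsto {n : ℕ} (A P : Matrix (Fin n) (Fin n) ℝ)
    (hP : P.PosDef) (hL : (P - A * P * Aᵀ).PosDef) :
    Tendsto (fun k : ℕ => A ^ k) atTop (nhds 0) := by
  rcases Nat.eq_zero_or_pos n with hn | hn
  · subst hn
    have h0 : ∀ k : ℕ, (A ^ k) = (0 : Matrix (Fin 0) (Fin 0) ℝ) := fun k =>
      Subsingleton.elim _ _
    simp only [h0]
    exact tendsto_const_nhds
  haveI : Nonempty (Fin n) := ⟨⟨0, hn⟩⟩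
  set f : (Fin n → ℝ) → ℝ := fun x => x ⬝ᵥ P *ᵥ x with hfdef
  have hfc : Continuous f :=
    continuous_id.dotProduct (continuous_const.matrix_mulVec continuous_id)
  have hfpos : ∀ x : Fin n → ℝ, x ≠ 0 → 0 < f x := by
    intro x hx
    simpa using hP.dotProduct_mulVec_pos hx
  have hfhom : ∀ (t : ℝ) (x : Fin n → ℝ), f (t • x) = t ^ 2 * f x := by
    intro t x
    simp only [hfdef, Matrix.mulVec_smul, smul_dotProduct, dotProduct_smul,
      smul_eq_mul]
    ring
  have hf0 : f 0 = 0 := by simp [hfdef]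
  have hfnn : ∀ x, 0 ≤ f x := by
    intro x
    rcases eq_or_ne x 0 with rfl | hx
    · simp [hf0]
    · exact (hfpos x hx).le
  set u : (Fin n → ℝ) → ℝ := fun x => f (Aᵀ *ᵥ x) with hudef
  have huc : Continuous u := hfc.comp (continuous_const.matrix_mulVec continuous_id)
  have huhom : ∀ (t : ℝ) (x : Fin n → ℝ), u (t • x) = t ^ 2 * u x := by
    intro t x
    simp only [hudef, Matrix.mulVec_smul, hfhom]
  have hult : ∀ x : Fin n → ℝ, x ≠ 0 → u x < f x := by
    intro x hx
    have h := hL.dotProduct_mulVec_pos hx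
    rw [star_trivial, Matrix.sub_mulVec, dotProduct_sub] at h
    have hq : x ⬝ᵥ (A * P * Aᵀ) *ᵥ x = u x := by
      rw [← Matrix.mulVec_mulVec, ← Matrix.mulVec_mulVec, hudef]
      rw [Matrix.dotProduct_mulVec, ← Matrix.mulVec_transpose]
    rw [hq] at h
    have : f x = x ⬝ᵥ P *ᵥ x := rfl
    linarith
  -- compactness on the unit sphere
  have hSc : IsCompact (Metric.sphere (0 : Fin n → ℝ) 1) := isCompact_sphere _ _
  have hSne : (Metric.sphere (0 : Fin n → ℝ) 1).Nonempty :=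
    NormedSpace.sphere_nonempty.mpr zero_le_one
  have hSne0 : ∀ x ∈ Metric.sphere (0 : Fin n → ℝ) 1, x ≠ 0 := by
    intro x hxS
    rw [mem_sphere_zero_iff_norm] at hxS
    intro hc
    rw [hc] at hxS
    simpa using hxS
  obtain ⟨x₀, hx₀S, hx₀max⟩ := hSc.exists_isMaxOn hSne
    (ContinuousOn.div huc.continuousOn hfc.continuousOn
      (fun x hxS => (hfpos x (hSne0 x hxS)).ne'))
  obtain ⟨x₁, hx₁S, hx₁min⟩ := hSc.exists_isMinOn hSne hfc.continuousOn
  set c : ℝ := max (u x₀ / f x₀) 0 with hcdef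
  have hc0 : 0 ≤ c := le_max_right _ _
  have hc1 : c < 1 := by
    have hx₀ : x₀ ≠ 0 := hSne0 x₀ hx₀S
    exact max_lt ((div_lt_one (hfpos x₀ hx₀)).mpr (hult x₀ hx₀)) one_pos
  set ε : ℝ := f x₁ with hεdef
  have hε : 0 < ε := hfpos x₁ (hSne0 x₁ hx₁S)
  -- scaling to the sphere
  have hscale : ∀ x : Fin n → ℝ, x ≠ 0 →
      (‖x‖⁻¹ • x) ∈ Metric.sphere (0 : Fin n → ℝ) 1 ∧ x = ‖x‖ • (‖x‖⁻¹ • x) := by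
    intro x hx
    have ht : 0 < ‖x‖ := norm_pos_iff.mpr hx
    constructor
    · rw [mem_sphere_zero_iff_norm, norm_smul, norm_inv, norm_norm]
      exact inv_mul_cancel₀ ht.ne'
    · rw [smul_smul, mul_inv_cancel₀ ht.ne', one_smul]
  have hbound : ∀ x : Fin n → ℝ, u x ≤ c * f x := by
    intro x
    rcases eq_or_ne x 0 with rfl | hx
    · have : u 0 = 0 := by simp [hudef, hf0]
      simp [this, hf0]
    · obtain ⟨hmem, hxeq⟩ := hscale x hx
      have hfh : 0 < f (‖x‖⁻¹ • x) := hfpos _ (hSne0 _ hmem)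
      have h1 : u (‖x‖⁻¹ • x) ≤ c * f (‖x‖⁻¹ • x) := by
        calc u (‖x‖⁻¹ • x) = u (‖x‖⁻¹ • x) / f (‖x‖⁻¹ • x) * f (‖x‖⁻¹ • x) :=
              (div_mul_cancel₀ _ hfh.ne').symm
          _ ≤ c * f (‖x‖⁻¹ • x) :=
              mul_le_mul_of_nonneg_right
                (le_trans (hx₀max hmem) (le_max_left _ _)) hfh.le
      calc u x = ‖x‖ ^ 2 * u (‖x‖⁻¹ • x) := by rw [← huhom, ← hxeq]
        _ ≤ ‖x‖ ^ 2 * (c * f (‖x‖⁻¹ • x)) :=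
            mul_le_mul_of_nonneg_left h1 (sq_nonneg _)
        _ = c * (‖x‖ ^ 2 * f (‖x‖⁻¹ • x)) := by ring
        _ = c * f x := by rw [← hfhom, ← hxeq]
  have hlow : ∀ x : Fin n → ℝ, ε * ‖x‖ ^ 2 ≤ f x := by
    intro x
    rcases eq_or_ne x 0 with rfl | hx
    · simp [hf0]
    · obtain ⟨hmem, hxeq⟩ := hscale x hx
      calc ε * ‖x‖ ^ 2 ≤ f (‖x‖⁻¹ • x) * ‖x‖ ^ 2 :=
            mul_le_mul_of_nonneg_right (hx₁min hmem) (sq_nonneg _)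
        _ = ‖x‖ ^ 2 * f (‖x‖⁻¹ • x) := by ring
        _ = f x := by rw [← hfhom, ← hxeq]
  have hiter : ∀ (x : Fin n → ℝ) (k : ℕ), f ((Aᵀ) ^ k *ᵥ x) ≤ c ^ k * f x := by
    intro x k
    induction k with
    | zero => simp
    | succ k ih =>
        rw [pow_succ', ← Matrix.mulVec_mulVec]
        calc f (Aᵀ *ᵥ ((Aᵀ) ^ k *ᵥ x)) = u ((Aᵀ) ^ k *ᵥ x) := rfl
          _ ≤ c * f ((Aᵀ) ^ k *ᵥ x) := hbound _
          _ ≤ c * (c ^ k * f x) := mul_le_mul_of_nonneg_left ih hc0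
          _ = c ^ (k + 1) * f x := by ring
  have key : ∀ x : Fin n → ℝ, Tendsto (fun k : ℕ => (Aᵀ) ^ k *ᵥ x) atTop (nhds 0) := by
    intro x
    apply squeeze_zero_norm (a := fun k : ℕ => Real.sqrt (c ^ k * (f x / ε)))
    · intro k
      rw [Real.le_sqrt (norm_nonneg _)]
      have h1 := hlow ((Aᵀ) ^ k *ᵥ x)
      have h2 := hiter x k
      rw [show c ^ k * (f x / ε) = c ^ k * f x / ε by ring, le_div_iff₀ hε]
      nlinarith [le_trans h1 h2]
      exact mul_nonneg (pow_nonneg hc0 k) (div_nonneg (hfnn x) hε.le)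
    · have := ((tendsto_pow_atTop_nhds_zero_of_lt_one hc0 hc1).mul_const (f x / ε)).sqrt
      simpa using this
  have hAk : ∀ i j : Fin n, Tendsto (fun k : ℕ => (A ^ k) i j) atTop (nhds 0) := by
    intro i j
    have h := key (Pi.single i 1)
    have h2 := (tendsto_pi_nhds.mp h) j
    have heq : ∀ k : ℕ, ((Aᵀ) ^ k *ᵥ Pi.single i 1) j = (A ^ k) i j := by
      intro k
      rw [← Matrix.transpose_pow, Matrix.mulVec_single]
      simp [Matrix.transpose_apply]
      rw [← Matrix.transpose_pow, Matrix.transpose_apply]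
    simpa only [heq, Pi.zero_apply] using h2
  apply tendsto_pi_nhds.mpr
  intro i
  rw [tendsto_pi_nhds]
  intro j
  simpa using hAk i j

/-- Proposition 2, part (i): stability of the controller obtained from a feasible SDP solution. -/
theorem stmt_5 (n m T : ℕ) (hT : 1 ≤ T)
    (A₀ : Matrix (Fin n) (Fin n) ℝ) (B₀ : Matrix (Fin n) (Fin m) ℝ)
    (U₀ : Matrix (Fin m) (Fin T) ℝ) (X₀o : Matrix (Fin n) (Fin T) ℝ)
    (X₁o : Matrix (Fin n) (Fin T) ℝ) (hX₁o : X₁o = A₀ * X₀o + B₀ * U₀)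
    (Φo : Matrix (Fin m ⊕ Fin n) (Fin T) ℝ) (hΦo : Φo = fromRows U₀ X₀o)
    (U₀bar : Matrix (Fin m) (Fin m ⊕ Fin n) ℝ) (hU₀bar : U₀bar = (T : ℝ)⁻¹ • (U₀ * Φoᵀ))
    (X₀obar : Matrix (Fin n) (Fin m ⊕ Fin n) ℝ) (hX₀obar : X₀obar = (T : ℝ)⁻¹ • (X₀o * Φoᵀ))
    (X₁obar : Matrix (Fin n) (Fin m ⊕ Fin n) ℝ) (hX₁obar : X₁obar = (T : ℝ)⁻¹ • (X₁o * Φoᵀ))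
    (Qx : Matrix (Fin m ⊕ Fin n) (Fin n) ℝ) (P : Matrix (Fin n) (Fin n) ℝ)
    (hcons : X₀obar * Qx = P)
    (hLMI : (fromBlocks P (X₁obar * Qx) (X₁obar * Qx)ᵀ P).PosDef)
    (Kx : Matrix (Fin m) (Fin n) ℝ) (hKx : Kx = U₀bar * Qx * P⁻¹)
    (Acl : Matrix (Fin n) (Fin n) ℝ) (hAcl : Acl = A₀ + B₀ * Kx) :
    P.PosDef ∧ (P - Acl * P * Aclᵀ).PosDef ∧
      Tendsto (fun k : ℕ => Acl ^ k) atTop (nhds 0) := by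
  have hPpd : P.PosDef := aux_posDef_block hLMI
  have hPdet : IsUnit P.det := isUnit_iff_ne_zero.mpr (ne_of_gt hPpd.det_pos)
  have hPsymm : Pᵀ = P := by
    rw [← Matrix.conjTranspose_eq_transpose_of_trivial]
    exact hPpd.1
  have e1 : X₁obar * Qx = A₀ * P + B₀ * (U₀bar * Qx) := by
    rw [hX₁obar, hX₁o, ← hcons, hX₀obar, hU₀bar]
    simp only [Matrix.add_mul, Matrix.smul_mul, Matrix.mul_smul, smul_add, Matrix.mul_assoc]
  have e2 : Acl * P = A₀ * P + B₀ * (U₀bar * Qx) := by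
    rw [hAcl, hKx, Matrix.add_mul, Matrix.mul_assoc B₀,
      Matrix.nonsing_inv_mul_cancel_right _ _ hPdet]
  have hS : X₁obar * Qx = Acl * P := e1.trans e2.symm
  rw [hS] at hLMI
  have hschur := aux_schur hPpd hLMI
  have hLyap : (P - Acl * P * Aclᵀ).PosDef := by
    have heq : Acl * P * P⁻¹ * (Acl * P)ᵀ = Acl * P * Aclᵀ := by
      rw [Matrix.transpose_mul, hPsymm, ← Matrix.mul_assoc,
        Matrix.nonsing_inv_mul_cancel_right _ _ hPdet]
    rwa [heq] at hschur
  exact ⟨hPpd, hLyap, aux_lyap_tendsto Acl P hPpd hLyap⟩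
end

section
/- (Proposition 2, part (i): feasibility of the SDP under stabilizability.) Suppose the sample covariance Σᵒ := (1/T)·Φᵒ·(Φᵒ)ᵀ is invertible, and suppose there exists a stabilizing linear static state-feedback gain, i.e., there exist K ∈ ℝ^{m×n} and a positive definite P₀ ∈ ℝ^{n×n} such that P₀ − (A₀ + B₀K)·P₀·(A₀ + B₀K)ᵀ is positive definite. Then there exist Q_x, Q_r ∈ ℝ^{(m+n)×n} and a positive definite P ∈ ℝ^{n×n} such that X̄₀ᵒ·Q_x = P, X̄₀ᵒ·Q_r = 0_{n×n}, and the 2n×2n block matrix [[P, X̄₁ᵒ·Q_x], [(X̄₁ᵒ·Q_x)ᵀ, P]] is positive definite. -/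
open Matrix

lemma posDef_fromBlocks₂₂ {m n : Type*} [Fintype m] [Fintype n] [DecidableEq m] [DecidableEq n]
    (A : Matrix m m ℝ) (B : Matrix m n ℝ) {D : Matrix n n ℝ} (hD : D.PosDef) [Invertible D]
    (h : (A - B * D⁻¹ * Bᴴ).PosDef) : (fromBlocks A B Bᴴ D).PosDef := by
  refine Matrix.PosDef.of_dotProduct_mulVec_pos ((Matrix.IsHermitian.fromBlocks₂₂ A B hD.1).2 h.1) fun z hz => ?_
  have hzdecomp : z = (z ∘ Sum.inl) ⊕ᵥ (z ∘ Sum.inr) := by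
    ext (i | i) <;> rfl
  set x : m → ℝ := z ∘ Sum.inl with hx
  set y : n → ℝ := z ∘ Sum.inr with hy
  have key := Matrix.schur_complement_eq₂₂ A B x y hD.1
  have hrw : dotProduct (star z) ((fromBlocks A B Bᴴ D) *ᵥ z)
      = dotProduct (star ((D⁻¹ * Bᴴ) *ᵥ x + y)) (D *ᵥ ((D⁻¹ * Bᴴ) *ᵥ x + y))
        + dotProduct (star x) ((A - B * D⁻¹ * Bᴴ) *ᵥ x) := by
    rw [dotProduct_mulVec, hzdecomp, key, ← dotProduct_mulVec, ← dotProduct_mulVec]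
  rw [hrw]
  by_cases hxz : x = 0
  · have hyz : y ≠ 0 := by
      intro hy0
      apply hz
      rw [hzdecomp, hxz, hy0]
      ext (i | i) <;> rfl
    have h1 : (D⁻¹ * Bᴴ) *ᵥ x + y = y := by rw [hxz, mulVec_zero, zero_add]
    rw [h1, hxz, star_zero, zero_dotProduct, add_zero]
    exact hD.dotProduct_mulVec_pos hyz
  · have h1 : 0 ≤ dotProduct (star ((D⁻¹ * Bᴴ) *ᵥ x + y)) (D *ᵥ ((D⁻¹ * Bᴴ) *ᵥ x + y)) :=
      hD.posSemidef.dotProduct_mulVec_nonneg _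
    have h2 : 0 < dotProduct (star x) ((A - B * D⁻¹ * Bᴴ) *ᵥ x) := h.dotProduct_mulVec_pos hxz
    linarith

/-- Proposition 2, part (i): feasibility of the SDP under stabilizability. -/
theorem stmt_6 (n m T : ℕ) (hT : 1 ≤ T)
    (A₀ : Matrix (Fin n) (Fin n) ℝ) (B₀ : Matrix (Fin n) (Fin m) ℝ)
    (U₀ : Matrix (Fin m) (Fin T) ℝ) (X₀o : Matrix (Fin n) (Fin T) ℝ)
    (X₁o : Matrix (Fin n) (Fin T) ℝ) (hX₁o : X₁o = A₀ * X₀o + B₀ * U₀)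
    (Φo : Matrix (Fin m ⊕ Fin n) (Fin T) ℝ) (hΦo : Φo = fromRows U₀ X₀o)
    (Sigo : Matrix (Fin m ⊕ Fin n) (Fin m ⊕ Fin n) ℝ) (hSigo : Sigo = (T : ℝ)⁻¹ • (Φo * Φoᵀ))
    (hinv : IsUnit Sigo)
    (X₀obar : Matrix (Fin n) (Fin m ⊕ Fin n) ℝ) (hX₀obar : X₀obar = (T : ℝ)⁻¹ • (X₀o * Φoᵀ))
    (X₁obar : Matrix (Fin n) (Fin m ⊕ Fin n) ℝ) (hX₁obar : X₁obar = (T : ℝ)⁻¹ • (X₁o * Φoᵀ))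
    (K : Matrix (Fin m) (Fin n) ℝ) (P₀ : Matrix (Fin n) (Fin n) ℝ) (hP₀ : P₀.PosDef)
    (hstab : (P₀ - (A₀ + B₀ * K) * P₀ * (A₀ + B₀ * K)ᵀ).PosDef) :
    ∃ (Qx Qr : Matrix (Fin m ⊕ Fin n) (Fin n) ℝ) (P : Matrix (Fin n) (Fin n) ℝ),
      P.PosDef ∧ X₀obar * Qx = P ∧ X₀obar * Qr = (0 : Matrix (Fin n) (Fin n) ℝ) ∧
      (fromBlocks P (X₁obar * Qx) (X₁obar * Qx)ᵀ P).PosDef := by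
  set U₀bar : Matrix (Fin m) (Fin m ⊕ Fin n) ℝ := (T : ℝ)⁻¹ • (U₀ * Φoᵀ) with hU₀bar
  have hS : Sigo = fromRows U₀bar X₀obar := by
    rw [hSigo, hΦo, hX₀obar, hU₀bar, Matrix.fromRows_mul, ← hΦo]
    ext (i | i) j <;> simp
  have hSinv : Sigo * Sigo⁻¹ = 1 :=
    Matrix.mul_nonsing_inv _ ((Matrix.isUnit_iff_isUnit_det _).1 hinv)
  set R : Matrix (Fin m ⊕ Fin n) (Fin n) ℝ := fromRows (K * P₀) P₀ with hR
  set Qx : Matrix (Fin m ⊕ Fin n) (Fin n) ℝ := Sigo⁻¹ * R with hQx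
  -- selectors
  have hXsel : X₀obar = (fromCols (0 : Matrix (Fin n) (Fin m) ℝ) (1 : Matrix (Fin n) (Fin n) ℝ)) * Sigo := by
    rw [hS, fromCols_mul_fromRows]
    simp
  have hUsel : U₀bar = (fromCols (1 : Matrix (Fin m) (Fin m) ℝ) (0 : Matrix (Fin m) (Fin n) ℝ)) * Sigo := by
    rw [hS, fromCols_mul_fromRows]
    simp
  have hX₀Qx : X₀obar * Qx = P₀ := by
    rw [hXsel, hQx, Matrix.mul_assoc, ← Matrix.mul_assoc Sigo, hSinv, Matrix.one_mul, hR,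
      fromCols_mul_fromRows]
    simp
  have hU₀Qx : U₀bar * Qx = K * P₀ := by
    rw [hUsel, hQx, Matrix.mul_assoc, ← Matrix.mul_assoc Sigo, hSinv, Matrix.one_mul, hR,
      fromCols_mul_fromRows]
    simp
  have hX₁bar : X₁obar = A₀ * X₀obar + B₀ * U₀bar := by
    rw [hX₁obar, hX₀obar, hU₀bar, hX₁o, Matrix.add_mul, Matrix.mul_assoc, Matrix.mul_assoc,
      smul_add, Matrix.mul_smul, Matrix.mul_smul]
  have hX₁Qx : X₁obar * Qx = (A₀ + B₀ * K) * P₀ := by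
    rw [hX₁bar, Matrix.add_mul, Matrix.mul_assoc, Matrix.mul_assoc, hX₀Qx, hU₀Qx,
      Matrix.add_mul, Matrix.mul_assoc]
  refine ⟨Qx, 0, P₀, hP₀, hX₀Qx, by rw [Matrix.mul_zero], ?_⟩
  rw [hX₁Qx]
  set G : Matrix (Fin n) (Fin n) ℝ := (A₀ + B₀ * K) * P₀ with hG
  have hGH : Gᵀ = Gᴴ := (Matrix.conjTranspose_eq_transpose_of_trivial G).symm
  rw [hGH]
  haveI : Invertible P₀ := hP₀.isUnit.invertible
  apply posDef_fromBlocks₂₂ _ _ hP₀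
  have hPP : P₀ * P₀⁻¹ = 1 := Matrix.mul_inv_of_invertible P₀
  have hPt : P₀ᵀ = P₀ := by
    rw [← Matrix.conjTranspose_eq_transpose_of_trivial]; exact hP₀.1
  have hGHt : Gᴴ = P₀ * (A₀ + B₀ * K)ᵀ := by
    rw [← hGH, hG, Matrix.transpose_mul, hPt]
  have : G * P₀⁻¹ * Gᴴ = (A₀ + B₀ * K) * P₀ * (A₀ + B₀ * K)ᵀ := by
    rw [hGHt]; simp only [hG, Matrix.mul_assoc]
    rw [← Matrix.mul_assoc P₀⁻¹ P₀, Matrix.inv_mul_of_invertible, Matrix.one_mul]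
  rw [this]
  exact hstab
end

section
/- (Proposition 2, part (ii): matching from a zero-cost feasible SDP solution.) Suppose Q_x, Q_r ∈ ℝ^{(m+n)×n} and an invertible P ∈ ℝ^{n×n} satisfy X̄₁ᵒ·Q_x = A_M·P, X̄₁ᵒ·Q_r = B_M·P, X̄₀ᵒ·Q_x = P, and X̄₀ᵒ·Q_r = 0_{n×n}. Then the controller gains K_x := Ū₀·Q_x·P⁻¹ and K_r := Ū₀·Q_r·P⁻¹ solve the model-reference matching problem: A₀ + B₀·K_x = A_M and B₀·K_r = B_M. -/
open Matrix

/-- Proposition 2, part (ii): matching from a zero-cost feasible SDP solution. -/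
theorem stmt_7 (n m T : ℕ) (hT : 1 ≤ T)
    (A₀ : Matrix (Fin n) (Fin n) ℝ) (B₀ : Matrix (Fin n) (Fin m) ℝ)
    (U₀ : Matrix (Fin m) (Fin T) ℝ) (X₀o : Matrix (Fin n) (Fin T) ℝ)
    (A_M B_M : Matrix (Fin n) (Fin n) ℝ)
    (X₁o : Matrix (Fin n) (Fin T) ℝ) (hX₁o : X₁o = A₀ * X₀o + B₀ * U₀)
    (Φo : Matrix (Fin m ⊕ Fin n) (Fin T) ℝ) (hΦo : Φo = fromRows U₀ X₀o)
    (U₀bar : Matrix (Fin m) (Fin m ⊕ Fin n) ℝ) (hU₀bar : U₀bar = (T : ℝ)⁻¹ • (U₀ * Φoᵀ))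
    (X₀obar : Matrix (Fin n) (Fin m ⊕ Fin n) ℝ) (hX₀obar : X₀obar = (T : ℝ)⁻¹ • (X₀o * Φoᵀ))
    (X₁obar : Matrix (Fin n) (Fin m ⊕ Fin n) ℝ) (hX₁obar : X₁obar = (T : ℝ)⁻¹ • (X₁o * Φoᵀ))
    (Qx Qr : Matrix (Fin m ⊕ Fin n) (Fin n) ℝ) (P : Matrix (Fin n) (Fin n) ℝ)
    (hPinv : IsUnit P)
    (h1 : X₁obar * Qx = A_M * P) (h2 : X₁obar * Qr = B_M * P)
    (h3 : X₀obar * Qx = P) (h4 : X₀obar * Qr = (0 : Matrix (Fin n) (Fin n) ℝ))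
    (Kx Kr : Matrix (Fin m) (Fin n) ℝ)
    (hKx : Kx = U₀bar * Qx * P⁻¹) (hKr : Kr = U₀bar * Qr * P⁻¹) :
    A₀ + B₀ * Kx = A_M ∧ B₀ * Kr = B_M := by
  have hdet : IsUnit P.det := (Matrix.isUnit_iff_isUnit_det P).mp hPinv
  have hkey : X₁obar = A₀ * X₀obar + B₀ * U₀bar := by
    rw [hX₁obar, hX₀obar, hU₀bar, hX₁o, Matrix.add_mul, Matrix.mul_assoc, Matrix.mul_assoc,
      Matrix.mul_smul, Matrix.mul_smul, smul_add]
  have hUx : B₀ * (U₀bar * Qx) = A_M * P - A₀ * P := by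
    rw [← h1, hkey, Matrix.add_mul, Matrix.mul_assoc, Matrix.mul_assoc, h3]
    abel
  have hUr : B₀ * (U₀bar * Qr) = B_M * P := by
    rw [← h2, hkey, Matrix.add_mul, Matrix.mul_assoc, Matrix.mul_assoc, h4, Matrix.mul_zero,
      zero_add]
  constructor
  · have : (A₀ + B₀ * Kx) * P = A_M * P := by
      rw [hKx, Matrix.add_mul, Matrix.mul_assoc, Matrix.mul_assoc,
        Matrix.nonsing_inv_mul _ hdet, Matrix.mul_one, hUx]
      abel
    calc A₀ + B₀ * Kx = (A₀ + B₀ * Kx) * P * P⁻¹ := by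
          rw [Matrix.mul_nonsing_inv_cancel_right _ _ hdet]
      _ = A_M * P * P⁻¹ := by rw [this]
      _ = A_M := by rw [Matrix.mul_nonsing_inv_cancel_right _ _ hdet]
  · calc B₀ * Kr = B₀ * (U₀bar * Qr) * P⁻¹ := by
          rw [hKr, Matrix.mul_assoc, Matrix.mul_assoc, Matrix.mul_assoc]
      _ = B_M * P * P⁻¹ := by rw [hUr]
      _ = B_M := by rw [Matrix.mul_nonsing_inv_cancel_right _ _ hdet]
end

section
/- (Proposition 2, part (ii): feasibility of the SDP under matching feasibility.) Suppose the sample covariance Σᵒ := (1/T)·Φᵒ·(Φᵒ)ᵀ is invertible, suppose the matching problem is feasible (there exist K_x, K_r ∈ ℝ^{m×n} with A₀ + B₀·K_x = A_M and B₀·K_r = B_M), and suppose the reference model is stable in the sense that there exists a positive definite P₀ ∈ ℝ^{n×n} with P₀ − A_M·P₀·A_Mᵀ positive definite. Then there exist Q_x, Q_r ∈ ℝ^{(m+n)×n} and a positive definite P ∈ ℝ^{n×n} attaining zero cost and satisfying all constraints of the SDP: X̄₁ᵒ·Q_x = A_M·P, X̄₁ᵒ·Q_r = B_M·P, X̄₀ᵒ·Q_x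 = P, X̄₀ᵒ·Q_r = 0_{n×n}, and the 2n×2n block matrix [[P, X̄₁ᵒ·Q_x], [(X̄₁ᵒ·Q_x)ᵀ, P]] is positive definite. -/
open Matrix

open scoped Matrix in
lemma aux_posDef_fromBlocks₂₂ {m n : Type*} [Fintype m] [Fintype n] [DecidableEq m]
    [DecidableEq n] (A : Matrix m m ℝ) (B : Matrix m n ℝ) {D : Matrix n n ℝ} (hD : D.PosDef)
    (hS : (A - B * D⁻¹ * Bᴴ).PosDef) : (fromBlocks A B Bᴴ D).PosDef := by
  haveI : Invertible D := invertibleOfIsUnitDet D hD.det_pos.ne'.isUnit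
  refine Matrix.PosDef.of_dotProduct_mulVec_pos ((Matrix.IsHermitian.fromBlocks₂₂ A B hD.1).mpr hS.1) fun z hz => ?_
  have hz' : z = (z ∘ Sum.inl) ⊕ᵥ (z ∘ Sum.inr) := (Sum.elim_comp_inl_inr z).symm
  rw [dotProduct_mulVec, hz', Matrix.schur_complement_eq₂₂ A B _ _ hD.1]
  set x := z ∘ Sum.inl with hx
  set y := z ∘ Sum.inr with hy
  by_cases hxz : x = 0
  · have hyz : y ≠ 0 := by
      intro h
      apply hz
      rw [hz', hxz, h]
      ext (i | i) <;> simp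
    have h1 : star ((D⁻¹ * Bᴴ) *ᵥ x + y) ᵥ* D ⬝ᵥ ((D⁻¹ * Bᴴ) *ᵥ x + y)
        = star y ⬝ᵥ D *ᵥ y := by
      rw [hxz, mulVec_zero, zero_add, dotProduct_mulVec]
    rw [h1, hxz]
    simpa using hD.dotProduct_mulVec_pos hyz
  · have h1 : 0 ≤ star ((D⁻¹ * Bᴴ) *ᵥ x + y) ᵥ* D ⬝ᵥ ((D⁻¹ * Bᴴ) *ᵥ x + y) := by
      rw [← dotProduct_mulVec]
      exact hD.posSemidef.dotProduct_mulVec_nonneg _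
    have h2 : 0 < star x ᵥ* (A - B * D⁻¹ * Bᴴ) ⬝ᵥ x := by
      rw [← dotProduct_mulVec]
      exact hS.dotProduct_mulVec_pos hxz
    linarith

/-- Proposition 2, part (ii): feasibility of the SDP under matching feasibility. -/
theorem stmt_8 (n m T : ℕ) (hT : 1 ≤ T)
    (A₀ : Matrix (Fin n) (Fin n) ℝ) (B₀ : Matrix (Fin n) (Fin m) ℝ)
    (U₀ : Matrix (Fin m) (Fin T) ℝ) (X₀o : Matrix (Fin n) (Fin T) ℝ)
    (A_M B_M : Matrix (Fin n) (Fin n) ℝ)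
    (X₁o : Matrix (Fin n) (Fin T) ℝ) (hX₁o : X₁o = A₀ * X₀o + B₀ * U₀)
    (Φo : Matrix (Fin m ⊕ Fin n) (Fin T) ℝ) (hΦo : Φo = fromRows U₀ X₀o)
    (Sigo : Matrix (Fin m ⊕ Fin n) (Fin m ⊕ Fin n) ℝ) (hSigo : Sigo = (T : ℝ)⁻¹ • (Φo * Φoᵀ))
    (hinv : IsUnit Sigo)
    (X₀obar : Matrix (Fin n) (Fin m ⊕ Fin n) ℝ) (hX₀obar : X₀obar = (T : ℝ)⁻¹ • (X₀o * Φoᵀ))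
    (X₁obar : Matrix (Fin n) (Fin m ⊕ Fin n) ℝ) (hX₁obar : X₁obar = (T : ℝ)⁻¹ • (X₁o * Φoᵀ))
    (Kx Kr : Matrix (Fin m) (Fin n) ℝ)
    (hmatchA : A₀ + B₀ * Kx = A_M) (hmatchB : B₀ * Kr = B_M)
    (P₀ : Matrix (Fin n) (Fin n) ℝ) (hP₀ : P₀.PosDef)
    (hMstab : (P₀ - A_M * P₀ * A_Mᵀ).PosDef) :
    ∃ (Qx Qr : Matrix (Fin m ⊕ Fin n) (Fin n) ℝ) (P : Matrix (Fin n) (Fin n) ℝ),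
      P.PosDef ∧
      X₁obar * Qx = A_M * P ∧ X₁obar * Qr = B_M * P ∧
      X₀obar * Qx = P ∧ X₀obar * Qr = (0 : Matrix (Fin n) (Fin n) ℝ) ∧
      (fromBlocks P (X₁obar * Qx) (X₁obar * Qx)ᵀ P).PosDef := by
  have hSS : Sigo * Sigo⁻¹ = 1 := Matrix.mul_nonsing_inv _ ((Matrix.isUnit_iff_isUnit_det _).mp hinv)
  -- rewrite the projected data matrices in terms of Sigo
  have hX1 : X₁obar = fromCols B₀ A₀ * Sigo := by
    rw [hX₁obar, hSigo, hX₁o, Matrix.mul_smul, ← Matrix.mul_assoc]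
    congr 1
    congr 1
    rw [hΦo, fromCols_mul_fromRows, add_comm]
  have hX0 : X₀obar = fromCols (0 : Matrix (Fin n) (Fin m) ℝ) (1 : Matrix (Fin n) (Fin n) ℝ) * Sigo := by
    rw [hX₀obar, hSigo, Matrix.mul_smul, ← Matrix.mul_assoc]
    congr 2
    rw [hΦo, fromCols_mul_fromRows]
    simp
  refine ⟨Sigo⁻¹ * fromRows (Kx * P₀) P₀, Sigo⁻¹ * fromRows (Kr * P₀) (0 : Matrix (Fin n) (Fin n) ℝ), P₀, hP₀, ?_, ?_, ?_, ?_, ?_⟩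
  · rw [hX1, Matrix.mul_assoc, ← Matrix.mul_assoc Sigo, hSS, Matrix.one_mul,
      fromCols_mul_fromRows, ← Matrix.mul_assoc, ← hmatchA, Matrix.add_mul, add_comm]
  · rw [hX1, Matrix.mul_assoc, ← Matrix.mul_assoc Sigo, hSS, Matrix.one_mul,
      fromCols_mul_fromRows, ← Matrix.mul_assoc, hmatchB]
    simp
  · rw [hX0, Matrix.mul_assoc, ← Matrix.mul_assoc Sigo, hSS, Matrix.one_mul,
      fromCols_mul_fromRows]
    simp
  · rw [hX0, Matrix.mul_assoc, ← Matrix.mul_assoc Sigo, hSS, Matrix.one_mul,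
      fromCols_mul_fromRows]
    simp
  · have hQ : X₁obar * (Sigo⁻¹ * fromRows (Kx * P₀) P₀) = A_M * P₀ := by
      rw [hX1, Matrix.mul_assoc, ← Matrix.mul_assoc Sigo, hSS, Matrix.one_mul,
        fromCols_mul_fromRows, ← Matrix.mul_assoc, ← hmatchA, Matrix.add_mul, add_comm]
    rw [hQ]
    haveI : Invertible P₀ := invertibleOfIsUnitDet P₀ hP₀.det_pos.ne'.isUnit
    have hherm : (A_M * P₀)ᵀ = (A_M * P₀)ᴴ := by
      ext i j
      simp [Matrix.conjTranspose_apply, Matrix.transpose_apply]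
    have key : (P₀ - (A_M * P₀) * P₀⁻¹ * (A_M * P₀)ᴴ).PosDef := by
      have : (A_M * P₀) * P₀⁻¹ * (A_M * P₀)ᴴ = A_M * P₀ * A_Mᵀ := by
        have hPH : (A_M * P₀)ᴴ = P₀ * A_Mᵀ := by
          rw [conjTranspose_mul, hP₀.1.eq]
          congr 1
        rw [hPH, Matrix.mul_assoc (A_M * P₀), ← Matrix.mul_assoc P₀⁻¹,
          Matrix.nonsing_inv_mul _ hP₀.det_pos.ne'.isUnit, Matrix.one_mul,
          Matrix.mul_assoc]
      rw [this]
      exact hMstab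
    have := aux_posDef_fromBlocks₂₂ P₀ (A_M * P₀) hP₀ key
    rw [← hherm] at this
    exact this
end

section
/- (Proposition 3, unbiasedness of the bias-corrected matrix: E[X̄₀ᵇᶜ] = X̄₀ᵒ.) Let the noise matrix V₀ ∈ ℝ^{n×T} have columns v(0), …, v(T−1), where the scalar components {v(t)_i} form a mutually independent family, each distributed N(0, σ²). Define the noisy state matrix X₀ := X₀ᵒ + V₀, the regressors Φ := [U₀; X₀] and Φᵒ := [U₀; X₀ᵒ] (vertical blocks in ℝ^{(m+n)×T}), the projected matrix X̄₀ := (1/T)·X₀·Φᵀ, the bias-correcting matrix Ψ := [0_{n×m}, T·σ²·I_n] (horizontal block in ℝ^{n×(m+n)}), and X̄₀ᵇᶜ := X̄₀ − (1/T)·Ψ. Then the entrywise expectation of X̄₀ᵇᶜ equals the deterministic noise-free matrix X̄₀ᵒ := (1/T)·X₀ᵒ·(Φᵒ)ᵀ. -/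
open Matrix MeasureTheory ProbabilityTheory

section Aux
open Real Filter MeasureTheory

private lemma tendsto_atBot_of_comp_neg {g : ℝ → ℝ} {c : ℝ}
    (hg : Tendsto (fun x => g (-x)) atTop (nhds c)) : Tendsto g atBot (nhds c) := by
  have h2 := hg.comp tendsto_neg_atBot_atTop
  have he : ((fun x => g (-x)) ∘ Neg.neg) = g := by funext x; simp
  rwa [he] at h2

private lemma tendsto_exp_sq_atTop {b : ℝ} (hb : 0 < b) :
    Tendsto (fun x : ℝ => Real.exp (-b * x ^ 2)) atTop (nhds 0) := by
  apply Real.tendsto_exp_atBot.comp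
  have h1 : Tendsto (fun x : ℝ => x ^ 2) atTop atTop := tendsto_pow_atTop two_ne_zero
  exact h1.const_mul_atTop_of_neg (neg_lt_zero.mpr hb)

private lemma integral_mul_exp_sq {b : ℝ} (hb : 0 < b) :
    ∫ x : ℝ, x * Real.exp (-b * x ^ 2) = 0 := by
  have hderiv : ∀ x : ℝ, HasDerivAt (fun y : ℝ => -(2*b)⁻¹ * Real.exp (-b * y ^ 2))
      (x * Real.exp (-b * x ^ 2)) x := by
    intro x
    have h1 : HasDerivAt (fun y : ℝ => -b * y ^ 2) (-b * (2 * x)) x := by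
      simpa using (hasDerivAt_pow 2 x).const_mul (-b)
    have h2 := (h1.exp).const_mul (-(2*b)⁻¹)
    refine h2.congr_deriv ?_
    field_simp
  have htop : Tendsto (fun x : ℝ => -(2*b)⁻¹ * Real.exp (-b * x ^ 2)) atTop (nhds 0) := by
    simpa using (tendsto_exp_sq_atTop hb).const_mul (-(2*b)⁻¹)
  have hbot : Tendsto (fun x : ℝ => -(2*b)⁻¹ * Real.exp (-b * x ^ 2)) atBot (nhds 0) := by
    apply tendsto_atBot_of_comp_neg
    simpa using htop
  simpa using MeasureTheory.integral_of_hasDerivAt_of_tendsto hderiv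
    (integrable_mul_exp_neg_mul_sq hb) hbot htop

private lemma integrable_sq_mul_exp_sq {b : ℝ} (hb : 0 < b) :
    Integrable (fun x : ℝ => x ^ 2 * Real.exp (-b * x ^ 2)) := by
  have h := integrable_rpow_mul_exp_neg_mul_sq hb (s := 2) (by norm_num)
  have he : ∀ x : ℝ, x ^ (2:ℝ) = x ^ 2 := fun x => by
    rw [show (2:ℝ) = ((2:ℕ):ℝ) by norm_num, Real.rpow_natCast]
  simpa [he] using h

private lemma integral_sq_mul_exp_sq {b : ℝ} (hb : 0 < b) :
    ∫ x : ℝ, x ^ 2 * Real.exp (-b * x ^ 2) = (2*b)⁻¹ * Real.sqrt (π / b) := by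
  have hint1 : Integrable (fun x : ℝ => Real.exp (-b * x ^ 2)) := integrable_exp_neg_mul_sq hb
  have hint2 := integrable_sq_mul_exp_sq hb
  have hderiv : ∀ x : ℝ, HasDerivAt (fun y : ℝ => -(2*b)⁻¹ * (y * Real.exp (-b * y ^ 2)))
      (x ^ 2 * Real.exp (-b * x ^ 2) - (2*b)⁻¹ * Real.exp (-b * x ^ 2)) x := by
    intro x
    have h1 : HasDerivAt (fun y : ℝ => -b * y ^ 2) (-b * (2 * x)) x := by
      simpa using (hasDerivAt_pow 2 x).const_mul (-b)
    have h2 := ((hasDerivAt_id x).mul h1.exp).const_mul (-(2*b)⁻¹)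
    refine h2.congr_deriv ?_
    field_simp
    simp only [id_eq]; ring
  have htop : Tendsto (fun x : ℝ => -(2*b)⁻¹ * (x * Real.exp (-b * x ^ 2))) atTop (nhds 0) := by
    have h0 : Tendsto (fun x : ℝ => Real.exp (-(1/2) * x)) atTop (nhds 0) :=
      Real.tendsto_exp_atBot.comp (tendsto_id.const_mul_atTop_of_neg (by norm_num))
    have h1 := (rpow_mul_exp_neg_mul_sq_isLittleO_exp_neg hb 1).isBigO.trans_tendsto h0
    have he : (fun x : ℝ => x ^ (1:ℝ) * Real.exp (-b * x ^ 2))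
        = fun x : ℝ => x * Real.exp (-b * x ^ 2) := by
      funext x; rw [Real.rpow_one]
    rw [he] at h1
    simpa using h1.const_mul (-(2*b)⁻¹)
  have hbot : Tendsto (fun x : ℝ => -(2*b)⁻¹ * (x * Real.exp (-b * x ^ 2))) atBot (nhds 0) := by
    apply tendsto_atBot_of_comp_neg
    have he : (fun x : ℝ => -(2*b)⁻¹ * ((-x) * Real.exp (-b * (-x) ^ 2)))
        = fun x : ℝ => -(-(2*b)⁻¹ * (x * Real.exp (-b * x ^ 2))) := by
      funext x; simp
    rw [he]
    simpa using htop.neg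
  have h0 := MeasureTheory.integral_of_hasDerivAt_of_tendsto hderiv
    (hint2.sub (hint1.const_mul ((2*b)⁻¹))) hbot htop
  rw [sub_zero] at h0
  rw [MeasureTheory.integral_sub hint2 (hint1.const_mul ((2*b)⁻¹)),
    integral_const_mul, integral_gaussian] at h0
  linarith [h0]

open ProbabilityTheory
open scoped NNReal ENNReal

private lemma gaussianPDF_eq_nnreal (v : ℝ≥0) :
    gaussianPDF 0 v = fun x => ((Real.toNNReal (gaussianPDFReal 0 v x) : ℝ≥0) : ℝ≥0∞) := rfl

private lemma gauss_integral_eq (v : ℝ≥0) (hv : v ≠ 0) (g : ℝ → ℝ) :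
    ∫ x, g x ∂(gaussianReal 0 v) = ∫ x, gaussianPDFReal 0 v x * g x := by
  rw [gaussianReal_of_var_ne_zero 0 hv, gaussianPDF_eq_nnreal,
    integral_withDensity_eq_integral_smul ((measurable_gaussianPDFReal 0 v).real_toNNReal) g]
  congr 1
  funext x
  rw [NNReal.smul_def, smul_eq_mul, Real.coe_toNNReal _ (gaussianPDFReal_nonneg 0 v x)]

private lemma gauss_integrable_iff (v : ℝ≥0) (hv : v ≠ 0) (g : ℝ → ℝ) :
    Integrable g (gaussianReal 0 v) ↔ Integrable (fun x => gaussianPDFReal 0 v x * g x) := by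
  rw [gaussianReal_of_var_ne_zero 0 hv, gaussianPDF_eq_nnreal,
    integrable_withDensity_iff_integrable_smul ((measurable_gaussianPDFReal 0 v).real_toNNReal)]
  constructor <;> intro h <;> [skip; skip] <;>
  · refine h.congr (Filter.Eventually.of_forall fun x => ?_)
    show _ = _
    simp only [NNReal.smul_def, smul_eq_mul, Real.coe_toNNReal _ (gaussianPDFReal_nonneg 0 v x)]

private lemma gaussianPDFReal_zero_eq (v : ℝ≥0) (hv : v ≠ 0) (x : ℝ) :
    gaussianPDFReal 0 v x = (Real.sqrt (2 * π * v))⁻¹ * Real.exp (-(2 * (v:ℝ))⁻¹ * x ^ 2) := by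
  have hv' : (0:ℝ) < v := NNReal.coe_pos.mpr (pos_iff_ne_zero.mpr hv)
  rw [gaussianPDFReal]
  congr 1
  rw [sub_zero]
  field_simp

private lemma gauss_id_fun_eq (v : ℝ≥0) (hv : v ≠ 0) :
    (fun x : ℝ => gaussianPDFReal 0 v x * x)
      = fun x => (Real.sqrt (2*π*v))⁻¹ * (x * Real.exp (-(2*(v:ℝ))⁻¹ * x ^ 2)) := by
  funext x; rw [gaussianPDFReal_zero_eq v hv]; ring

private lemma gauss_sq_fun_eq (v : ℝ≥0) (hv : v ≠ 0) :
    (fun x : ℝ => gaussianPDFReal 0 v x * x ^ 2)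
      = fun x => (Real.sqrt (2*π*v))⁻¹ * (x ^ 2 * Real.exp (-(2*(v:ℝ))⁻¹ * x ^ 2)) := by
  funext x; rw [gaussianPDFReal_zero_eq v hv]; ring

private lemma gauss_b_pos (v : ℝ≥0) (hv : v ≠ 0) : (0:ℝ) < (2*(v:ℝ))⁻¹ := by
  have hv' : (0:ℝ) < v := NNReal.coe_pos.mpr (pos_iff_ne_zero.mpr hv)
  positivity

private lemma integrable_id_gauss (v : ℝ≥0) (hv : v ≠ 0) :
    Integrable (fun x : ℝ => x) (gaussianReal 0 v) := by
  rw [gauss_integrable_iff v hv, gauss_id_fun_eq v hv]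
  exact ((integrable_mul_exp_neg_mul_sq (gauss_b_pos v hv)).const_mul _)

private lemma integral_id_gauss (v : ℝ≥0) (hv : v ≠ 0) :
    ∫ x, x ∂(gaussianReal 0 v) = 0 := by
  rw [gauss_integral_eq v hv, gauss_id_fun_eq v hv, integral_const_mul,
    integral_mul_exp_sq (gauss_b_pos v hv), mul_zero]

private lemma integrable_sq_gauss (v : ℝ≥0) (hv : v ≠ 0) :
    Integrable (fun x : ℝ => x ^ 2) (gaussianReal 0 v) := by
  rw [gauss_integrable_iff v hv, gauss_sq_fun_eq v hv]
  exact ((integrable_sq_mul_exp_sq (gauss_b_pos v hv)).const_mul _)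

private lemma integral_sq_gauss (v : ℝ≥0) (hv : v ≠ 0) :
    ∫ x, x ^ 2 ∂(gaussianReal 0 v) = v := by
  have hv' : (0:ℝ) < v := NNReal.coe_pos.mpr (pos_iff_ne_zero.mpr hv)
  rw [gauss_integral_eq v hv, gauss_sq_fun_eq v hv, integral_const_mul,
    integral_sq_mul_exp_sq (gauss_b_pos v hv)]
  have e1 : (π / ((2*(v:ℝ))⁻¹)) = 2*π*(v:ℝ) := by field_simp
  have e2 : (2*((2*(v:ℝ))⁻¹))⁻¹ = (v:ℝ) := by field_simp
  rw [e1, e2]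
  have h2v : (0:ℝ) < 2*π*(v:ℝ) := by positivity
  have hs : Real.sqrt (2*π*(v:ℝ)) ≠ 0 := ne_of_gt (Real.sqrt_pos.mpr h2v)
  field_simp

open Matrix


end Aux

open scoped NNReal ENNReal

/-- Proposition 3, unbiasedness of the bias-corrected matrix: `E[X̄₀ᵇᶜ] = X̄₀ᵒ`. -/
theorem stmt_10 {Ω : Type*} [MeasurableSpace Ω] (μ : Measure Ω) [IsProbabilityMeasure μ]
    (n m T : ℕ) (hT : 1 ≤ T) (σ : ℝ) (hσ : 0 < σ)
    (U₀ : Matrix (Fin m) (Fin T) ℝ) (X₀o : Matrix (Fin n) (Fin T) ℝ)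
    (v : Fin T → Ω → Fin n → ℝ)
    (hmeas : ∀ t i, Measurable fun ω => v t ω i)
    (hindep : iIndepFun (m := fun _ : Fin T × Fin n => (inferInstance : MeasurableSpace ℝ))
      (fun p ω => v p.1 ω p.2) μ)
    (hdist : ∀ t i, Measure.map (fun ω => v t ω i) μ
      = gaussianReal 0 ⟨σ ^ 2, sq_nonneg σ⟩)
    -- noise matrix, noisy data, regressors and projected matrices
    (V₀ : Ω → Matrix (Fin n) (Fin T) ℝ) (hV₀ : ∀ ω, V₀ ω = Matrix.of fun i t => v t ω i)
    (X₀ : Ω → Matrix (Fin n) (Fin T) ℝ) (hX₀ : ∀ ω, X₀ ω = X₀o + V₀ ω)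
    (Φ : Ω → Matrix (Fin m ⊕ Fin n) (Fin T) ℝ) (hΦ : ∀ ω, Φ ω = fromRows U₀ (X₀ ω))
    (Φo : Matrix (Fin m ⊕ Fin n) (Fin T) ℝ) (hΦo : Φo = fromRows U₀ X₀o)
    (X₀bar : Ω → Matrix (Fin n) (Fin m ⊕ Fin n) ℝ)
    (hX₀bar : ∀ ω, X₀bar ω = (T : ℝ)⁻¹ • (X₀ ω * (Φ ω)ᵀ))
    (Ψ : Matrix (Fin n) (Fin m ⊕ Fin n) ℝ)
    (hΨ : Ψ = fromCols (0 : Matrix (Fin n) (Fin m) ℝ)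
      (((T : ℝ) * σ ^ 2) • (1 : Matrix (Fin n) (Fin n) ℝ)))
    (X₀bc : Ω → Matrix (Fin n) (Fin m ⊕ Fin n) ℝ)
    (hX₀bc : ∀ ω, X₀bc ω = X₀bar ω - (T : ℝ)⁻¹ • Ψ)
    (X₀obar : Matrix (Fin n) (Fin m ⊕ Fin n) ℝ) (hX₀obar : X₀obar = (T : ℝ)⁻¹ • (X₀o * Φoᵀ)) :
    ∀ (i : Fin n) (j : Fin m ⊕ Fin n), ∫ ω, X₀bc ω i j ∂μ = X₀obar i j := by

  have hσ2 : (⟨σ ^ 2, sq_nonneg σ⟩ : ℝ≥0) ≠ 0 := by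
    intro h
    have h2 : σ ^ 2 = 0 := congrArg NNReal.toReal h
    exact (pow_pos hσ 2).ne' h2
  -- integrability and expectation of the noise entries
  have Iv : ∀ (t : Fin T) (p : Fin n), Integrable (fun ω => v t ω p) μ := by
    intro t p
    have h1 : Integrable (fun x : ℝ => x) (Measure.map (fun ω => v t ω p) μ) := by
      rw [hdist t p]; exact integrable_id_gauss _ hσ2
    have h2 := (integrable_map_measure aestronglyMeasurable_id
      (hmeas t p).aemeasurable).mp h1
    simpa [Function.comp] using h2
  have Ev : ∀ (t : Fin T) (p : Fin n), ∫ ω, v t ω p ∂μ = 0 := by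
    intro t p
    have h1 : ∫ x, x ∂(Measure.map (fun ω => v t ω p) μ) = ∫ ω, v t ω p ∂μ :=
      integral_map (hmeas t p).aemeasurable aestronglyMeasurable_id
    rw [← h1, hdist t p]
    exact integral_id_gauss _ hσ2
  have Isq : ∀ (t : Fin T) (p : Fin n), Integrable (fun ω => v t ω p ^ 2) μ := by
    intro t p
    have h1 : Integrable (fun x : ℝ => x ^ 2) (Measure.map (fun ω => v t ω p) μ) := by
      rw [hdist t p]; exact integrable_sq_gauss _ hσ2
    have h2 := (integrable_map_measure (measurable_id.pow_const 2).aestronglyMeasurable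
      (hmeas t p).aemeasurable).mp h1
    exact h2
  have Esq : ∀ (t : Fin T) (p : Fin n), ∫ ω, v t ω p ^ 2 ∂μ = σ ^ 2 := by
    intro t p
    have h1 : ∫ x, x ^ 2 ∂(Measure.map (fun ω => v t ω p) μ) = ∫ ω, v t ω p ^ 2 ∂μ :=
      integral_map (hmeas t p).aemeasurable (measurable_id.pow_const 2).aestronglyMeasurable
    rw [← h1, hdist t p, integral_sq_gauss _ hσ2]
    rfl
  have Ivv : ∀ (t : Fin T) (p q : Fin n), Integrable (fun ω => v t ω p * v t ω q) μ := by
    intro t p q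
    by_cases h : p = q
    · subst h
      simpa [pow_two] using Isq t p
    · have hne : ((t, p) : Fin T × Fin n) ≠ (t, q) := by simp [h]
      exact ((hindep.indepFun hne).integrable_mul (Iv t p) (Iv t q))
  have Evv : ∀ (t : Fin T) (p q : Fin n),
      ∫ ω, v t ω p * v t ω q ∂μ = if p = q then σ ^ 2 else 0 := by
    intro t p q
    by_cases h : p = q
    · subst h
      simpa [pow_two] using Esq t p
    · have hne : ((t, p) : Fin T × Fin n) ≠ (t, q) := by simp [h]
      rw [if_neg h]
      have hh := (hindep.indepFun hne).integral_mul_eq_mul_integral (Iv t p).aestronglyMeasurable (Iv t q).aestronglyMeasurable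
      simpa [Ev t p, Ev t q] using hh
  -- key per-summand computations
  have keyI' : ∀ (t : Fin T) (c u : ℝ) (p : Fin n),
      Integrable (fun ω => (c + v t ω p) * u) μ :=
    fun t c u p => ((integrable_const c).add (Iv t p)).mul_const u
  have keyE' : ∀ (t : Fin T) (c u : ℝ) (p : Fin n),
      ∫ ω, (c + v t ω p) * u ∂μ = c * u := by
    intro t c u p
    have he : (fun ω => (c + v t ω p) * u) = fun ω => c * u + u * v t ω p := by
      funext ω; ring
    have I1 : Integrable (fun ω => u * v t ω p) μ := (Iv t p).const_mul u
    rw [he, integral_add (integrable_const _) I1, integral_const, integral_const_mul, Ev t p]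
    simp
  have keyI : ∀ (t : Fin T) (c d : ℝ) (p q : Fin n),
      Integrable (fun ω => (c + v t ω p) * (d + v t ω q)) μ := by
    intro t c d p q
    have he : (fun ω => (c + v t ω p) * (d + v t ω q))
        = fun ω => c * d + (c * v t ω q + (d * v t ω p + v t ω p * v t ω q)) := by
      funext ω; ring
    rw [he]
    exact (integrable_const _).add (((Iv t q).const_mul c).add
      (((Iv t p).const_mul d).add (Ivv t p q)))
  have keyE : ∀ (t : Fin T) (c d : ℝ) (p q : Fin n),
      ∫ ω, (c + v t ω p) * (d + v t ω q) ∂μ = c * d + if p = q then σ ^ 2 else 0 := by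
    intro t c d p q
    have he : (fun ω => (c + v t ω p) * (d + v t ω q))
        = fun ω => c * d + (c * v t ω q + (d * v t ω p + v t ω p * v t ω q)) := by
      funext ω; ring
    have I4 : Integrable (fun ω => v t ω p * v t ω q) μ := Ivv t p q
    have I3 : Integrable (fun ω => d * v t ω p) μ := (Iv t p).const_mul d
    have I2 : Integrable (fun ω => c * v t ω q) μ := (Iv t q).const_mul c
    have I34 : Integrable (fun ω => d * v t ω p + v t ω p * v t ω q) μ := I3.add I4
    have I234 : Integrable (fun ω => c * v t ω q + (d * v t ω p + v t ω p * v t ω q)) μ :=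
      I2.add I34
    rw [he, integral_add (integrable_const _) I234, integral_add I2 I34, integral_add I3 I4,
      integral_const, integral_const_mul, integral_const_mul, Ev t p, Ev t q, Evv t p q]
    simp
  have hT0 : (T : ℝ) ≠ 0 := Nat.cast_ne_zero.mpr (by omega)
  intro i j
  cases j with
  | inl a =>
    have hrw : ∀ ω, X₀bc ω i (Sum.inl a)
        = (T : ℝ)⁻¹ * ∑ t, (X₀o i t + v t ω i) * U₀ a t := by
      intro ω
      simp [hX₀bc, hX₀bar, hX₀, hV₀, hΦ, hΨ, Matrix.mul_apply, Matrix.smul_apply,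
        Matrix.sub_apply, Matrix.add_apply, Matrix.transpose_apply, smul_eq_mul]
    have hRHS : X₀obar i (Sum.inl a) = (T : ℝ)⁻¹ * ∑ t, X₀o i t * U₀ a t := by
      simp [hX₀obar, hΦo, Matrix.mul_apply, Matrix.smul_apply, Matrix.transpose_apply,
        smul_eq_mul]
    simp only [hrw, hRHS]
    rw [integral_const_mul, integral_finset_sum _ (fun t _ => keyI' t _ _ _)]
    congr 1
    exact Finset.sum_congr rfl fun t _ => keyE' t _ _ _
  | inr b =>
    have hrw : ∀ ω, X₀bc ω i (Sum.inr b)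
        = (T : ℝ)⁻¹ * ∑ t, (X₀o i t + v t ω i) * (X₀o b t + v t ω b)
          - (T : ℝ)⁻¹ * ((T : ℝ) * σ ^ 2 * if i = b then 1 else 0) := by
      intro ω
      simp [hX₀bc, hX₀bar, hX₀, hV₀, hΦ, hΨ, Matrix.mul_apply, Matrix.smul_apply,
        Matrix.sub_apply, Matrix.add_apply, Matrix.transpose_apply, Matrix.one_apply,
        smul_eq_mul, mul_ite, mul_one, mul_zero]
    have hRHS : X₀obar i (Sum.inr b) = (T : ℝ)⁻¹ * ∑ t, X₀o i t * X₀o b t := by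
      simp [hX₀obar, hΦo, Matrix.mul_apply, Matrix.smul_apply, Matrix.transpose_apply,
        smul_eq_mul]
    simp only [hrw, hRHS]
    rw [integral_sub ((integrable_finset_sum _ (fun t _ => keyI t _ _ _ _)).const_mul _)
      (integrable_const _), integral_const, integral_const_mul,
      integral_finset_sum _ (fun t _ => keyI t _ _ _ _)]
    have hsum : ∑ t : Fin T, ∫ ω, (X₀o i t + v t ω i) * (X₀o b t + v t ω b) ∂μ
        = (∑ t : Fin T, X₀o i t * X₀o b t) + (T : ℝ) * if i = b then σ ^ 2 else 0 := by
      rw [Finset.sum_congr rfl fun t _ => keyE t _ _ _ _, Finset.sum_add_distrib,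
        Finset.sum_const, Finset.card_univ, Fintype.card_fin, nsmul_eq_mul]
    rw [hsum]
    simp only [measure_univ, ENNReal.toReal_one, smul_eq_mul, one_mul]
    by_cases hib : i = b <;> simp [hib] <;> field_simp <;> ring
end

section
/- (Proposition 3, condition (C2): almost-sure consistency of the shifted data matrix.) Let (v(t))_{t∈ℕ} be random vectors in ℝⁿ whose scalar components {v(t)_i : t ∈ ℕ, 1 ≤ i ≤ n} form a mutually independent family, each distributed N(0, σ²). Assume the deterministic sequences are bounded: there exist C_u, C_x such that ‖u(t)‖ ≤ C_u and ‖xᵒ(t)‖ ≤ C_x for all t. For each T ≥ 1 form the matrices U₀(T), X₀ᵒ(T), X₁ᵒ(T), V₀(T), V₁(T) whose columns are u(0),…,u(T−1); xᵒ(0),…,xᵒ(T−1); xᵒ(1),…,xᵒ(T); v(0),…,v(T−1); v(1),…,v(T), respectively; set X₀(T) := X₀ᵒ(T) + V₀(T), X₁(T) := X₁ᵒ(T) + V₁(T), Φ(T) := [U₀(T); X₀(T)], Φᵒ(T) := [U₀(T); X₀ᵒ(T)], X̄₁(T) := (1/T)·X₁(T)·Φ(T)ᵀ, and X̄₁ᵒ(T)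 := (1/T)·X₁ᵒ(T)·Φᵒ(T)ᵀ. Then, almost surely, X̄₁(T) − X̄₁ᵒ(T) → 0_{n×(m+n)} as T → ∞. -/
open Matrix MeasureTheory ProbabilityTheory Filter
open scoped NNReal ENNReal

/-- The matrix whose `T` columns are `f 0, …, f (T-1)`. -/
noncomputable def colMat {d : ℕ} (f : ℕ → Fin d → ℝ) (T : ℕ) : Matrix (Fin d) (Fin T) ℝ :=
  Matrix.of fun i t => f t i

lemma aux_int_pow_of_int4 {Ω : Type*} [MeasurableSpace Ω] {μ : Measure Ω} [IsFiniteMeasure μ]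
    {f : Ω → ℝ} (hf : AEStronglyMeasurable f μ)
    (h4 : Integrable (fun ω => f ω ^ 4) μ) {k : ℕ} (hk : k ≤ 4) :
    Integrable (fun ω => f ω ^ k) μ := by
  have hbd : ∀ ω, ‖f ω ^ k‖ ≤ 1 + f ω ^ 4 := by
    intro ω
    rw [Real.norm_eq_abs, abs_pow]
    rcases le_total |f ω| 1 with h | h
    · have h1 : |f ω| ^ k ≤ 1 := pow_le_one₀ (abs_nonneg _) h
      nlinarith [pow_nonneg (abs_nonneg (f ω)) 4, sq_abs (f ω), sq_nonneg (f ω ^ 2)]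
    · have h1 : |f ω| ^ k ≤ |f ω| ^ 4 := pow_le_pow_right₀ h hk
      have h2 : |f ω| ^ 4 = f ω ^ 4 := by
        rw [← abs_pow, abs_of_nonneg (by positivity)]
      nlinarith
  exact Integrable.mono' ((integrable_const 1).add h4) (hf.pow _) (ae_of_all _ hbd)

lemma aux_gauss_int4 {V : ℝ≥0} (hV : V ≠ 0) :
    Integrable (fun x : ℝ => x ^ 4) (gaussianReal 0 V) := by
  rw [gaussianReal_of_var_ne_zero _ hV]
  rw [integrable_withDensity_iff (measurable_gaussianPDF _ _)
      (ae_of_all _ fun x => ENNReal.ofReal_lt_top)]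
  have hVpos : (0:ℝ) < (V:ℝ) := by positivity
  have hb : (0:ℝ) < (2 * (V:ℝ))⁻¹ := by positivity
  have h : Integrable (fun x : ℝ => x ^ (4:ℕ) * Real.exp (-(2 * (V:ℝ))⁻¹ * x ^ 2)) := by
    have := integrable_rpow_mul_exp_neg_mul_sq hb (s := ((4:ℕ) : ℝ)) (by norm_num)
    refine this.congr (ae_of_all _ fun x => ?_)
    have : x ^ (((4:ℕ)):ℝ) = x ^ (4:ℕ) := Real.rpow_natCast x 4
    simp only [this]
  have h2 := h.const_mul ((Real.sqrt (2 * Real.pi * (V:ℝ)))⁻¹)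
  refine h2.congr (ae_of_all _ fun x => ?_)
  have hpdf : (gaussianPDF 0 V x).toReal
      = (Real.sqrt (2 * Real.pi * (V:ℝ)))⁻¹ * Real.exp (-(2 * (V:ℝ))⁻¹ * x ^ 2) := by
    rw [gaussianPDF_def, ENNReal.toReal_ofReal (gaussianPDFReal_nonneg _ _ _),
      gaussianPDFReal_def]
    have : -(x - 0) ^ 2 / (2 * (V:ℝ)) = -(2 * (V:ℝ))⁻¹ * x ^ 2 := by
      field_simp
      ring
    simp only [this]
  simp only [hpdf]
  ring

lemma aux_gauss_mean (V : ℝ≥0) : ∫ x, x ∂(gaussianReal 0 V) = 0 := by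
  rcases eq_or_ne V 0 with h | h
  · simp [h]
  · have h2 : (⟨(-1:ℝ)^2, sq_nonneg _⟩ : ℝ≥0) = 1 := by ext; norm_num
    have hmap : (gaussianReal 0 V).map (fun x => (-1 : ℝ) * x) = gaussianReal 0 V := by
      have h1 := gaussianReal_map_const_mul (μ := 0) (v := V) (-1)
      rw [show (NNReal.mk ((-1:ℝ)^2) (sq_nonneg _)) = 1 by ext; norm_num] at h1
      simpa using h1
    have hint : ∫ x, x ∂(gaussianReal 0 V)
        = ∫ x, (-1 : ℝ) * x ∂(gaussianReal 0 V) := by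
      conv_lhs => rw [← hmap]
      exact integral_map (f := fun x : ℝ => x) (by fun_prop) aestronglyMeasurable_id
    have := hint
    rw [integral_const_mul] at this
    linarith

lemma aux_core {Ω : Type*} [MeasurableSpace Ω] {μ : Measure Ω} [IsProbabilityMeasure μ]
    (ξ : ℕ → Ω → ℝ) (hmeas : ∀ t, Measurable (ξ t))
    (hint : ∀ t, Integrable (fun ω => ξ t ω ^ 4) μ)
    (hmean : ∀ t, ∫ ω, ξ t ω ∂μ = 0)
    (M2 M4 : ℝ)
    (h2 : ∀ t, ∫ ω, ξ t ω ^ 2 ∂μ ≤ M2)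
    (h4 : ∀ t, ∫ ω, ξ t ω ^ 4 ∂μ ≤ M4)
    (hind : ∀ T, IndepFun (fun ω => ∑ t ∈ Finset.range T, ξ t ω) (ξ T) μ) :
    ∀ᵐ ω ∂μ, Tendsto (fun T : ℕ => (T:ℝ)⁻¹ * ∑ t ∈ Finset.range T, ξ t ω)
      atTop (nhds 0) := by
  set S : ℕ → Ω → ℝ := fun T ω => ∑ t ∈ Finset.range T, ξ t ω with hS
  have hSmeas : ∀ T, Measurable (S T) := fun T =>
    Finset.measurable_sum _ fun t _ => hmeas t
  have hM2 : 0 ≤ M2 := le_trans (integral_nonneg fun ω => sq_nonneg _) (h2 0)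
  have hM4 : 0 ≤ M4 := le_trans (integral_nonneg fun ω => by positivity) (h4 0)
  set K : ℝ := M4 + 3 * M2 ^ 2 with hK
  have hKnn : 0 ≤ K := by positivity
  -- the inductive moment bounds
  have main : ∀ T : ℕ, Integrable (fun ω => S T ω ^ 4) μ ∧ (∫ ω, S T ω ∂μ = 0)
      ∧ (∫ ω, S T ω ^ 2 ∂μ ≤ T * M2) ∧ (∫ ω, S T ω ^ 4 ∂μ ≤ K * T ^ 2) := by
    intro T
    induction T with
    | zero =>
      refine ⟨?_, ?_, ?_, ?_⟩ <;> simp [hS]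
    | succ T ih =>
      obtain ⟨ihInt4, ihMean, ihV, ihQ⟩ := ih
      have hsucc : ∀ ω, S (T + 1) ω = S T ω + ξ T ω := fun ω =>
        Finset.sum_range_succ _ _
      -- integrability of powers
      have hSint : ∀ k, k ≤ 4 → Integrable (fun ω => S T ω ^ k) μ := fun k hk =>
        aux_int_pow_of_int4 (hSmeas T).aestronglyMeasurable ihInt4 hk
      have hXint : ∀ k, k ≤ 4 → Integrable (fun ω => ξ T ω ^ k) μ := fun k hk =>
        aux_int_pow_of_int4 (hmeas T).aestronglyMeasurable (hint T) hk
      have hip : ∀ a b : ℕ, IndepFun (fun ω => S T ω ^ a) (fun ω => ξ T ω ^ b) μ := by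
        intro a b
        exact (hind T).comp (measurable_id.pow_const a) (measurable_id.pow_const b)
      have hprodint : ∀ a b : ℕ, a ≤ 4 → b ≤ 4 →
          Integrable (fun ω => S T ω ^ a * ξ T ω ^ b) μ := by
        intro a b ha hb
        exact (hip a b).integrable_mul (hSint a ha) (hXint b hb)
      have hprodeq : ∀ a b : ℕ, (∫ ω, S T ω ^ a * ξ T ω ^ b ∂μ)
          = (∫ ω, S T ω ^ a ∂μ) * ∫ ω, ξ T ω ^ b ∂μ := by
        intro a b
        exact (hip a b).integral_mul_eq_mul_integral ((hSmeas T).pow_const a).aestronglyMeasurable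
          ((hmeas T).pow_const b).aestronglyMeasurable
      -- integrability of S (T+1) ^ 4
      have hint4' : Integrable (fun ω => S (T+1) ω ^ 4) μ := by
        have : (fun ω => S (T+1) ω ^ 4)
            = fun ω => S T ω ^ 4 + 4 * (S T ω ^ 3 * ξ T ω ^ 1)
              + 6 * (S T ω ^ 2 * ξ T ω ^ 2) + 4 * (S T ω ^ 1 * ξ T ω ^ 3)
              + ξ T ω ^ 4 := by
          funext ω; rw [hsucc ω]; ring
        rw [this]
        exact (((((hSint 4 le_rfl).add ((hprodint 3 1 (by norm_num) (by norm_num)).const_mul 4)).add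
          ((hprodint 2 2 (by norm_num) (by norm_num)).const_mul 6)).add
          ((hprodint 1 3 (by norm_num) (by norm_num)).const_mul 4)).add (hXint 4 le_rfl))
      refine ⟨hint4', ?_, ?_, ?_⟩
      · -- mean zero
        have : (fun ω => S (T+1) ω) = fun ω => S T ω + ξ T ω := funext hsucc
        rw [this, integral_add (by simpa using hSint 1 (by norm_num))
          (by simpa using hXint 1 (by norm_num)), ihMean, hmean T, add_zero]
      · -- second moment
        have hexp : (fun ω => S (T+1) ω ^ 2)
            = fun ω => S T ω ^ 2 + 2 * (S T ω ^ 1 * ξ T ω ^ 1) + ξ T ω ^ 2 := by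
          funext ω; rw [hsucc ω]; ring
        have I1 : Integrable (fun ω => 2 * (S T ω ^ 1 * ξ T ω ^ 1)) μ :=
          (hprodint 1 1 (by norm_num) (by norm_num)).const_mul 2
        have I2 : Integrable (fun ω => S T ω ^ 2 + 2 * (S T ω ^ 1 * ξ T ω ^ 1)) μ :=
          (hSint 2 (by norm_num)).add I1
        have hcalc : ∫ ω, S (T+1) ω ^ 2 ∂μ
            = (∫ ω, S T ω ^ 2 ∂μ)
              + 2 * ((∫ ω, S T ω ^ 1 ∂μ) * ∫ ω, ξ T ω ^ 1 ∂μ)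
              + ∫ ω, ξ T ω ^ 2 ∂μ := by
          have hpt : (fun ω => S (T+1) ω ^ 2)
              = fun ω => (S T ω ^ 2 + 2 * (S T ω ^ 1 * ξ T ω ^ 1)) + ξ T ω ^ 2 := by
            funext ω; rw [hsucc ω]; ring
          rw [congrArg (fun g : Ω → ℝ => ∫ ω, g ω ∂μ) hpt,
            integral_add I2 (hXint 2 (by norm_num)),
            integral_add (hSint 2 (by norm_num)) I1,
            integral_const_mul, hprodeq 1 1]
        rw [hcalc]
        simp only [pow_one]
        simp only [hmean T, ihMean, mul_zero, zero_mul, add_zero, zero_add]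
        push_cast
        nlinarith [h2 T, ihV]
      · -- fourth moment
        have hexp : (fun ω => S (T+1) ω ^ 4)
            = fun ω => S T ω ^ 4 + 4 * (S T ω ^ 3 * ξ T ω ^ 1)
              + 6 * (S T ω ^ 2 * ξ T ω ^ 2) + 4 * (S T ω ^ 1 * ξ T ω ^ 3)
              + ξ T ω ^ 4 := by
          funext ω; rw [hsucc ω]; ring
        have J31 : Integrable (fun ω => 4 * (S T ω ^ 3 * ξ T ω ^ 1)) μ :=
          (hprodint 3 1 (by norm_num) (by norm_num)).const_mul 4
        have J22 : Integrable (fun ω => 6 * (S T ω ^ 2 * ξ T ω ^ 2)) μ :=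
          (hprodint 2 2 (by norm_num) (by norm_num)).const_mul 6
        have J13 : Integrable (fun ω => 4 * (S T ω ^ 1 * ξ T ω ^ 3)) μ :=
          (hprodint 1 3 (by norm_num) (by norm_num)).const_mul 4
        have P1 : Integrable (fun ω => S T ω ^ 4 + 4 * (S T ω ^ 3 * ξ T ω ^ 1)) μ :=
          (hSint 4 le_rfl).add J31
        have P2 : Integrable (fun ω => S T ω ^ 4 + 4 * (S T ω ^ 3 * ξ T ω ^ 1)
            + 6 * (S T ω ^ 2 * ξ T ω ^ 2)) μ := P1.add J22
        have P3 : Integrable (fun ω => S T ω ^ 4 + 4 * (S T ω ^ 3 * ξ T ω ^ 1)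
            + 6 * (S T ω ^ 2 * ξ T ω ^ 2) + 4 * (S T ω ^ 1 * ξ T ω ^ 3)) μ := P2.add J13
        have hcalc : ∫ ω, S (T+1) ω ^ 4 ∂μ
            = (∫ ω, S T ω ^ 4 ∂μ)
              + 4 * ((∫ ω, S T ω ^ 3 ∂μ) * ∫ ω, ξ T ω ^ 1 ∂μ)
              + 6 * ((∫ ω, S T ω ^ 2 ∂μ) * ∫ ω, ξ T ω ^ 2 ∂μ)
              + 4 * ((∫ ω, S T ω ^ 1 ∂μ) * ∫ ω, ξ T ω ^ 3 ∂μ)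
              + ∫ ω, ξ T ω ^ 4 ∂μ := by
          have hpt : (fun ω => S (T+1) ω ^ 4)
              = fun ω => (S T ω ^ 4 + 4 * (S T ω ^ 3 * ξ T ω ^ 1) + 6 * (S T ω ^ 2 * ξ T ω ^ 2)
                + 4 * (S T ω ^ 1 * ξ T ω ^ 3)) + ξ T ω ^ 4 := by
            funext ω; rw [hsucc ω]; ring
          rw [congrArg (fun g : Ω → ℝ => ∫ ω, g ω ∂μ) hpt,
            integral_add P3 (hXint 4 le_rfl),
            integral_add P2 J13,
            integral_add P1 J22,
            integral_add (hSint 4 le_rfl) J31,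
            integral_const_mul, integral_const_mul, integral_const_mul,
            hprodeq 3 1, hprodeq 2 2, hprodeq 1 3]
        rw [hcalc]
        simp only [pow_one]
        simp only [hmean T, ihMean, mul_zero, zero_mul, add_zero, zero_add]
        have e2S : 0 ≤ ∫ ω, S T ω ^ 2 ∂μ := integral_nonneg fun ω => sq_nonneg _
        have e2X : 0 ≤ ∫ ω, ξ T ω ^ 2 ∂μ := integral_nonneg fun ω => sq_nonneg _
        have e4X : 0 ≤ ∫ ω, ξ T ω ^ 4 ∂μ := integral_nonneg fun ω => by positivity
        have hmm : (∫ ω, S T ω ^ 2 ∂μ) * ∫ ω, ξ T ω ^ 2 ∂μ ≤ (T * M2) * M2 :=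
          mul_le_mul ihV (h2 T) e2X (by positivity)
        have hTnn : (0:ℝ) ≤ (T:ℝ) := Nat.cast_nonneg T
        push_cast
        nlinarith [h4 T, ihQ, sq_nonneg M2, mul_nonneg hTnn hM4]
  -- now the Borel-Cantelli style argument
  set Y : ℕ → Ω → ℝ := fun T ω => ((T:ℝ)⁻¹ * S T ω) ^ 4 with hY
  have hYmeas : ∀ T, Measurable (Y T) := fun T =>
    ((measurable_const.mul (hSmeas T)).pow_const 4)
  have hYnn : ∀ T ω, 0 ≤ Y T ω := fun T ω => by positivity
  have hYint : ∀ T, Integrable (Y T) μ := by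
    intro T
    have : Y T = fun ω => ((T:ℝ)⁻¹) ^ 4 * S T ω ^ 4 := by
      funext ω; rw [hY]; ring
    rw [this]
    exact ((main T).1).const_mul _
  have hYbound : ∀ T, ∫ ω, Y T ω ∂μ ≤ K * ((T:ℝ) ^ 2)⁻¹ := by
    intro T
    have h1 : ∫ ω, Y T ω ∂μ = ((T:ℝ)⁻¹) ^ 4 * ∫ ω, S T ω ^ 4 ∂μ := by
      rw [show (∫ ω, Y T ω ∂μ) = ∫ ω, ((T:ℝ)⁻¹) ^ 4 * S T ω ^ 4 ∂μ from
        congrArg (fun g : Ω → ℝ => ∫ ω, g ω ∂μ) (by funext ω; rw [hY]; ring),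
        integral_const_mul]
    rw [h1]
    rcases eq_or_ne (T:ℝ) 0 with h | h
    · rw [h]; simp
    · have h2 : ((T:ℝ)⁻¹) ^ 4 * ∫ ω, S T ω ^ 4 ∂μ ≤ ((T:ℝ)⁻¹) ^ 4 * (K * (T:ℝ) ^ 2) :=
        mul_le_mul_of_nonneg_left (main T).2.2.2 (by positivity)
      refine h2.trans (le_of_eq ?_)
      field_simp
  have hsum : Summable (fun T : ℕ => K * ((T:ℝ) ^ 2)⁻¹) := by
    have := (Real.summable_one_div_nat_pow (p := 2)).mpr (by norm_num)
    simpa [one_div] using this.mul_left K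
  have hne : ∫⁻ ω, ∑' T, ENNReal.ofReal (Y T ω) ∂μ ≠ ⊤ := by
    rw [lintegral_tsum fun T => ((hYmeas T).ennreal_ofReal).aemeasurable]
    have heach : ∀ T, ∫⁻ ω, ENNReal.ofReal (Y T ω) ∂μ = ENNReal.ofReal (∫ ω, Y T ω ∂μ) :=
      fun T => (ofReal_integral_eq_lintegral_ofReal (hYint T)
        (ae_of_all _ fun ω => hYnn T ω)).symm
    simp only [heach]
    have hle : ∑' T, ENNReal.ofReal (∫ ω, Y T ω ∂μ)
        ≤ ∑' T : ℕ, ENNReal.ofReal (K * ((T:ℝ) ^ 2)⁻¹) :=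
      ENNReal.tsum_le_tsum fun T => ENNReal.ofReal_le_ofReal (hYbound T)
    refine ne_of_lt (lt_of_le_of_lt hle ?_)
    rw [← ENNReal.ofReal_tsum_of_nonneg (fun T => by positivity) hsum]
    exact ENNReal.ofReal_lt_top
  have hae : ∀ᵐ ω ∂μ, ∑' T, ENNReal.ofReal (Y T ω) < ⊤ :=
    ae_lt_top (Measurable.ennreal_tsum fun T => (hYmeas T).ennreal_ofReal) hne
  filter_upwards [hae] with ω hω
  have h0 : Tendsto (fun T => ENNReal.ofReal (Y T ω)) atTop (nhds 0) :=
    ENNReal.tendsto_atTop_zero_of_tsum_ne_top hω.ne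
  have h0r : Tendsto (fun T => Y T ω) atTop (nhds 0) := by
    have := (ENNReal.tendsto_toReal (by simp)).comp h0
    simp only [Function.comp_def, ENNReal.toReal_ofReal (hYnn _ ω)] at this
    simpa using this
  -- now from Y = a^4 → 0 conclude a → 0
  have habs : Tendsto (fun T : ℕ => |(T:ℝ)⁻¹ * S T ω|) atTop (nhds 0) := by
    have h4inv : Tendsto (fun T => (Y T ω) ^ ((4:ℝ)⁻¹)) atTop (nhds 0) := by
      have := h0r.rpow_const (p := (4:ℝ)⁻¹) (Or.inr (by norm_num))
      simpa [Real.zero_rpow] using this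
    refine h4inv.congr fun T => ?_
    simp only [hY]
    have hnn : 0 ≤ |(T:ℝ)⁻¹ * S T ω| := abs_nonneg _
    rw [show ((T:ℝ)⁻¹ * S T ω) ^ 4 = |(T:ℝ)⁻¹ * S T ω| ^ (4:ℕ) by
        rw [← abs_pow, abs_of_nonneg (by positivity)],
      ← Real.rpow_natCast |(T:ℝ)⁻¹ * S T ω| 4, ← Real.rpow_mul hnn]
    norm_num
  exact squeeze_zero_norm (fun T => le_of_eq (Real.norm_eq_abs _)) habs

lemma aux_par (w : ℕ → ℝ)
    (he : Tendsto (fun K : ℕ => (K:ℝ)⁻¹ * ∑ s ∈ Finset.range K, w (2*s)) atTop (nhds 0))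
    (ho : Tendsto (fun K : ℕ => (K:ℝ)⁻¹ * ∑ s ∈ Finset.range K, w (2*s+1)) atTop (nhds 0)) :
    Tendsto (fun T : ℕ => (T:ℝ)⁻¹ * ∑ t ∈ Finset.range T, w t) atTop (nhds 0) := by
  set E : ℕ → ℝ := fun K => ∑ s ∈ Finset.range K, w (2*s) with hE
  set O : ℕ → ℝ := fun K => ∑ s ∈ Finset.range K, w (2*s+1) with hO
  set e : ℕ → ℝ := fun K => (K:ℝ)⁻¹ * E K with he'
  set o : ℕ → ℝ := fun K => (K:ℝ)⁻¹ * O K with ho'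
  have hEe : ∀ K, E K = (K:ℝ) * e K := by
    intro K
    rcases Nat.eq_zero_or_pos K with h | h
    · subst h; simp [hE]
    · have : (K:ℝ) ≠ 0 := by positivity
      simp only [he']; rw [← mul_assoc, mul_inv_cancel₀ this, one_mul]
  have hOo : ∀ K, O K = (K:ℝ) * o K := by
    intro K
    rcases Nat.eq_zero_or_pos K with h | h
    · subst h; simp [hO]
    · have : (K:ℝ) ≠ 0 := by positivity
      simp only [ho']; rw [← mul_assoc, mul_inv_cancel₀ this, one_mul]
  have hsplit : ∀ T : ℕ, ∑ t ∈ Finset.range T, w t = E ((T+1)/2) + O (T/2) := by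
    intro T
    induction T with
    | zero => simp [hE, hO]
    | succ T ih =>
      rw [Finset.sum_range_succ, ih]
      rcases Nat.even_or_odd T with ⟨c, hc⟩ | ⟨c, hc⟩
      · have h3 : (T+1+1)/2 = c+1 := by omega
        have h1 : (T+1)/2 = c := by omega
        have h2 : T/2 = c := by omega
        rw [h3, h1, h2]
        have hsum : E (c+1) = E c + w (2*c) := Finset.sum_range_succ _ _
        rw [hsum, show 2*c = T by omega]
        ring
      · have h3 : (T+1+1)/2 = c+1 := by omega
        have h1 : (T+1)/2 = c+1 := by omega
        have h2 : T/2 = c := by omega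
        rw [h3, h1, h2]
        have hsum : O (c+1) = O c + w (2*c+1) := Finset.sum_range_succ _ _
        rw [hsum, show 2*c+1 = T by omega]
        ring
  have hcoef : ∀ (T c : ℕ), c ≤ T → (T:ℝ)⁻¹ * (c:ℝ) ≤ 1 := by
    intro T c hc
    rcases Nat.eq_zero_or_pos T with h | h
    · subst h
      interval_cases c
      simp
    · have hT : (0:ℝ) < T := by positivity
      calc (T:ℝ)⁻¹ * (c:ℝ) ≤ (T:ℝ)⁻¹ * (T:ℝ) := by
            refine mul_le_mul_of_nonneg_left ?_ (by positivity)
            exact_mod_cast hc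
        _ = 1 := inv_mul_cancel₀ hT.ne'
  have hbound : ∀ T : ℕ, |(T:ℝ)⁻¹ * ∑ t ∈ Finset.range T, w t|
      ≤ |e ((T+1)/2)| + |o (T/2)| := by
    intro T
    rw [hsplit T, hEe, hOo, mul_add]
    refine (abs_add_le _ _).trans ?_
    have h1 : |(T:ℝ)⁻¹ * ((((T+1)/2 : ℕ):ℝ) * e ((T+1)/2))| ≤ |e ((T+1)/2)| := by
      rw [← mul_assoc, abs_mul]
      have hnn : 0 ≤ (T:ℝ)⁻¹ * (((T+1)/2 : ℕ):ℝ) := by positivity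
      rw [abs_of_nonneg hnn]
      calc (T:ℝ)⁻¹ * (((T+1)/2 : ℕ):ℝ) * |e ((T+1)/2)|
          ≤ 1 * |e ((T+1)/2)| := by
            refine mul_le_mul_of_nonneg_right (hcoef T ((T+1)/2) (by omega)) (abs_nonneg _)
        _ = |e ((T+1)/2)| := one_mul _
    have h2 : |(T:ℝ)⁻¹ * (((T/2 : ℕ):ℝ) * o (T/2))| ≤ |o (T/2)| := by
      rw [← mul_assoc, abs_mul]
      have hnn : 0 ≤ (T:ℝ)⁻¹ * ((T/2 : ℕ):ℝ) := by positivity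
      rw [abs_of_nonneg hnn]
      calc (T:ℝ)⁻¹ * ((T/2 : ℕ):ℝ) * |o (T/2)|
          ≤ 1 * |o (T/2)| := by
            refine mul_le_mul_of_nonneg_right (hcoef T (T/2) (by omega)) (abs_nonneg _)
        _ = |o (T/2)| := one_mul _
    exact add_le_add h1 h2
  have hd1 : Tendsto (fun T : ℕ => (T+1)/2) atTop atTop :=
    tendsto_atTop_atTop.mpr fun b => ⟨2*b, fun a ha => by omega⟩
  have hd2 : Tendsto (fun T : ℕ => T/2) atTop atTop :=
    tendsto_atTop_atTop.mpr fun b => ⟨2*b, fun a ha => by omega⟩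
  have hg : Tendsto (fun T : ℕ => |e ((T+1)/2)| + |o (T/2)|) atTop (nhds 0) := by
    have h1 : Tendsto (fun T : ℕ => |e ((T+1)/2)|) atTop (nhds 0) := by
      have := (he.comp hd1).abs
      simpa using this
    have h2 : Tendsto (fun T : ℕ => |o (T/2)|) atTop (nhds 0) := by
      have := (ho.comp hd2).abs
      simpa using this
    simpa using h1.add h2
  exact squeeze_zero_norm (fun T => (Real.norm_eq_abs _).le.trans (hbound T)) hg

lemma aux_indep_comp {Ω : Type*} [MeasurableSpace Ω] {μ : Measure Ω} {ι : Type*}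
    {f : ι → Ω → ℝ}
    (hf : iIndepFun f μ)
    (hfm : ∀ p, Measurable (f p))
    (S T : Finset ι) (hST : Disjoint S T)
    {F : ((i : S) → ℝ) → ℝ} {G : ((i : T) → ℝ) → ℝ}
    (hF : Measurable F) (hG : Measurable G) :
    IndepFun (fun ω => F fun q => f q ω) (fun ω => G fun q => f q ω) μ :=
  (hf.indepFun_finset S T hST hfm).comp hF hG

lemma aux_moments {Ω : Type*} [MeasurableSpace Ω] {μ : Measure Ω} [IsProbabilityMeasure μ]
    {V : ℝ≥0} (hV : V ≠ 0) {X : Ω → ℝ} (hX : Measurable X)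
    (hmap : Measure.map X μ = gaussianReal 0 V) :
    (∀ k : ℕ, k ≤ 4 → Integrable (fun ω => X ω ^ k) μ) ∧ (∫ ω, X ω ∂μ = 0)
      ∧ (∀ k : ℕ, ∫ ω, X ω ^ k ∂μ = ∫ x, x ^ k ∂(gaussianReal 0 V)) := by
  have hmom : ∀ k : ℕ, ∫ ω, X ω ^ k ∂μ = ∫ x, x ^ k ∂(gaussianReal 0 V) := by
    intro k
    rw [← hmap]
    exact (integral_map (φ := X) hX.aemeasurable (f := fun x : ℝ => x ^ k)
      ((measurable_id.pow_const k).aestronglyMeasurable)).symm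
  refine ⟨?_, ?_, hmom⟩
  · intro k hk
    have hγ : Integrable (fun x : ℝ => x ^ k) (gaussianReal 0 V) :=
      aux_int_pow_of_int4 aestronglyMeasurable_id (by simpa using aux_gauss_int4 hV) hk
    rw [← hmap] at hγ
    exact (integrable_map_measure ((measurable_id.pow_const k).aestronglyMeasurable)
      hX.aemeasurable).mp hγ
  · have h1 : ∫ ω, X ω ∂μ = ∫ x, x ∂(gaussianReal 0 V) := by
      rw [← hmap]
      exact (integral_map hX.aemeasurable aestronglyMeasurable_id).symm
    rw [h1, aux_gauss_mean]

lemma aux_appA {Ω : Type*} [MeasurableSpace Ω] {μ : Measure Ω} [IsProbabilityMeasure μ]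
    {n : ℕ} {V : ℝ≥0} (hV : V ≠ 0) (v : ℕ → Ω → Fin n → ℝ)
    (hmeas : ∀ t i, Measurable fun ω => v t ω i)
    (hindep : iIndepFun
      (fun (p : ℕ × Fin n) ω => v p.1 ω p.2) μ)
    (hdist : ∀ t i, Measure.map (fun ω => v t ω i) μ = gaussianReal 0 V)
    (d : ℕ) (j : Fin n) (a : ℕ → ℝ) (C : ℝ) (hC : ∀ t, |a t| ≤ C) :
    ∀ᵐ ω ∂μ, Tendsto (fun T : ℕ => (T:ℝ)⁻¹ * ∑ t ∈ Finset.range T, a t * v (t+d) ω j)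
      atTop (nhds 0) := by
  classical
  set γ := gaussianReal 0 V with hγ
  set m2 : ℝ := ∫ x, x ^ 2 ∂γ with hm2
  set m4 : ℝ := ∫ x, x ^ 4 ∂γ with hm4
  have hm2nn : 0 ≤ m2 := integral_nonneg fun x => sq_nonneg x
  have hm4nn : 0 ≤ m4 := integral_nonneg fun x => by positivity
  have hmom := fun s => aux_moments hV (hmeas (s+d) j) (hdist (s+d) j)
  set ξ : ℕ → Ω → ℝ := fun t ω => a t * v (t+d) ω j with hξ
  have hCnn : 0 ≤ C := le_trans (abs_nonneg _) (hC 0)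
  refine aux_core ξ (fun t => (hmeas (t+d) j).const_mul _) ?_ ?_ (C^2 * m2) (C^4 * m4)
    ?_ ?_ ?_
  · intro t
    have h1 : Integrable (fun ω => (a t)^4 * v (t+d) ω j ^ 4) μ :=
      ((hmom t).1 4 le_rfl).const_mul _
    refine h1.congr (ae_of_all _ fun ω => ?_)
    simp only [hξ]; ring
  · intro t
    have : (∫ ω, ξ t ω ∂μ) = a t * ∫ ω, v (t+d) ω j ∂μ := integral_const_mul _ _
    rw [this, (hmom t).2.1, mul_zero]
  · intro t
    have h1 : (∫ ω, ξ t ω ^ 2 ∂μ) = (a t)^2 * ∫ ω, v (t+d) ω j ^ 2 ∂μ := by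
      rw [show (∫ ω, ξ t ω ^ 2 ∂μ) = ∫ ω, (a t)^2 * v (t+d) ω j ^ 2 ∂μ from
        congrArg (fun g : Ω → ℝ => ∫ ω, g ω ∂μ) (by funext ω; simp only [hξ]; ring),
        integral_const_mul]
    rw [h1, (hmom t).2.2 2, ← hm2]
    have ha : (a t)^2 ≤ C^2 := by
      have := pow_le_pow_left₀ (abs_nonneg (a t)) (hC t) 2
      rwa [← sq_abs]
    exact mul_le_mul_of_nonneg_right ha hm2nn
  · intro t
    have h1 : (∫ ω, ξ t ω ^ 4 ∂μ) = (a t)^4 * ∫ ω, v (t+d) ω j ^ 4 ∂μ := by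
      rw [show (∫ ω, ξ t ω ^ 4 ∂μ) = ∫ ω, (a t)^4 * v (t+d) ω j ^ 4 ∂μ from
        congrArg (fun g : Ω → ℝ => ∫ ω, g ω ∂μ) (by funext ω; simp only [hξ]; ring),
        integral_const_mul]
    rw [h1, (hmom t).2.2 4, ← hm4]
    have ha : (a t)^4 ≤ C^4 := by
      have := pow_le_pow_left₀ (abs_nonneg (a t)) (hC t) 4
      rwa [← abs_pow, abs_of_nonneg (by positivity : (0:ℝ) ≤ (a t)^4)] at this
    exact mul_le_mul_of_nonneg_right ha hm4nn
  · -- independence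
    intro T
    set S : Finset (ℕ × Fin n) := (Finset.range T).image (fun t => (t+d, j)) with hSdef
    set Tf : Finset (ℕ × Fin n) := {(T+d, j)} with hTdef
    have hST : Disjoint S Tf := by
      refine Finset.disjoint_left.mpr ?_
      intro q hq hq'
      simp only [hSdef, Finset.mem_image, Finset.mem_range] at hq
      simp only [hTdef, Finset.mem_singleton] at hq'
      obtain ⟨t, ht, rfl⟩ := hq
      have : t + d = T + d := congrArg Prod.fst hq'
      omega
    have hF : Measurable (fun g : ((q : S) → ℝ) =>
        ∑ t ∈ (Finset.range T).attach,
          a t * g ⟨((t:ℕ)+d, j), Finset.mem_image_of_mem _ t.2⟩) :=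
      Finset.measurable_sum _ fun t _ => (measurable_pi_apply _).const_mul _
    have hG : Measurable (fun g : ((q : Tf) → ℝ) =>
        a T * g ⟨(T+d, j), Finset.mem_singleton_self _⟩) :=
      (measurable_pi_apply _).const_mul _
    have hind := aux_indep_comp hindep (fun p => hmeas p.1 p.2) S Tf hST hF hG
    have hl : (fun ω => ∑ t ∈ (Finset.range T).attach,
          a t * (fun q : S => v (q : ℕ × Fin n).1 ω (q : ℕ × Fin n).2)
            ⟨((t:ℕ)+d, j), Finset.mem_image_of_mem _ t.2⟩)
        = fun ω => ∑ t ∈ Finset.range T, ξ t ω := by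
      funext ω
      exact Finset.sum_attach _ (fun t => a t * v (t+d) ω j)
    have hr : (fun ω => a T * (fun q : Tf => v (q : ℕ × Fin n).1 ω (q : ℕ × Fin n).2)
          ⟨(T+d, j), Finset.mem_singleton_self _⟩)
        = ξ T := rfl
    rw [← hl, ← hr]
    exact hind

lemma aux_appB {Ω : Type*} [MeasurableSpace Ω] {μ : Measure Ω} [IsProbabilityMeasure μ]
    {n : ℕ} {V : ℝ≥0} (hV : V ≠ 0) (v : ℕ → Ω → Fin n → ℝ)
    (hmeas : ∀ t i, Measurable fun ω => v t ω i)
    (hindep : iIndepFun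
      (fun (p : ℕ × Fin n) ω => v p.1 ω p.2) μ)
    (hdist : ∀ t i, Measure.map (fun ω => v t ω i) μ = gaussianReal 0 V)
    (r : ℕ) (i k : Fin n) :
    ∀ᵐ ω ∂μ, Tendsto (fun K : ℕ =>
        (K:ℝ)⁻¹ * ∑ s ∈ Finset.range K, v (2*s+r+1) ω i * v (2*s+r) ω k)
      atTop (nhds 0) := by
  classical
  set γ := gaussianReal 0 V with hγ
  set m2 : ℝ := ∫ x, x ^ 2 ∂γ with hm2
  set m4 : ℝ := ∫ x, x ^ 4 ∂γ with hm4
  have hmomA := fun s => aux_moments hV (hmeas (2*s+r+1) i) (hdist (2*s+r+1) i)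
  have hmomB := fun s => aux_moments hV (hmeas (2*s+r) k) (hdist (2*s+r) k)
  set ζ : ℕ → Ω → ℝ := fun s ω => v (2*s+r+1) ω i * v (2*s+r) ω k with hζ
  have hpair : ∀ s : ℕ, ((2*s+r+1, i) : ℕ × Fin n) ≠ (2*s+r, k) := by
    intro s h
    have := congrArg Prod.fst h
    simp at this
  have hip : ∀ s : ℕ, IndepFun (fun ω => v (2*s+r+1) ω i) (fun ω => v (2*s+r) ω k) μ :=
    fun s => hindep.indepFun (hpair s)
  have hippow : ∀ (s : ℕ) (a b : ℕ),
      IndepFun (fun ω => v (2*s+r+1) ω i ^ a) (fun ω => v (2*s+r) ω k ^ b) μ :=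
    fun s a b => (hip s).comp (measurable_id.pow_const a) (measurable_id.pow_const b)
  have hζmeas : ∀ s, Measurable (ζ s) := fun s => (hmeas _ i).mul (hmeas _ k)
  have hζint4 : ∀ s, Integrable (fun ω => ζ s ω ^ 4) μ := by
    intro s
    have h1 : Integrable ((fun ω => v (2*s+r+1) ω i ^ 4) * fun ω => v (2*s+r) ω k ^ 4) μ :=
      (hippow s 4 4).integrable_mul ((hmomA s).1 4 le_rfl) ((hmomB s).1 4 le_rfl)
    refine h1.congr (ae_of_all _ fun ω => ?_)
    simp only [hζ, Pi.mul_apply]; ring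
  have hζmom : ∀ (s a : ℕ), ∫ ω, ζ s ω ^ a ∂μ
      = (∫ x, x ^ a ∂γ) * ∫ x, x ^ a ∂γ := by
    intro s a
    have h1 : (∫ ω, ζ s ω ^ a ∂μ)
        = ∫ ω, ((fun ω => v (2*s+r+1) ω i ^ a) * fun ω => v (2*s+r) ω k ^ a) ω ∂μ :=
      congrArg (fun g : Ω → ℝ => ∫ ω, g ω ∂μ) (by funext ω; simp only [hζ, Pi.mul_apply]; ring)
    rw [h1]
    have h2 := (hippow s a a).integral_mul_eq_mul_integral
      ((hmeas _ i).pow_const a).aestronglyMeasurable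
      ((hmeas _ k).pow_const a).aestronglyMeasurable
    rw [show (∫ ω, ((fun ω => v (2*s+r+1) ω i ^ a) * fun ω => v (2*s+r) ω k ^ a) ω ∂μ)
        = ∫ ω, v (2*s+r+1) ω i ^ a * v (2*s+r) ω k ^ a ∂μ from rfl] at *
    rw [h2, (hmomA s).2.2 a, (hmomB s).2.2 a]
  refine aux_core ζ hζmeas hζint4 ?_ (m2 * m2) (m4 * m4) ?_ ?_ ?_
  · intro s
    have h2 := (hip s).integral_mul_eq_mul_integral (hmeas _ i).aestronglyMeasurable
      (hmeas _ k).aestronglyMeasurable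
    have : (∫ ω, ζ s ω ∂μ)
        = (∫ ω, v (2*s+r+1) ω i ∂μ) * ∫ ω, v (2*s+r) ω k ∂μ := h2
    rw [this, (hmomA s).2.1, zero_mul]
  · intro s
    rw [hζmom s 2, ← hm2]
  · intro s
    rw [hζmom s 4, ← hm4]
  · -- independence of partial sums from next term
    intro K
    set S : Finset (ℕ × Fin n) := (Finset.range (2*K+r)) ×ˢ Finset.univ with hSdef
    set Tf : Finset (ℕ × Fin n) := ({2*K+r, 2*K+r+1} : Finset ℕ) ×ˢ Finset.univ with hTdef
    have hST : Disjoint S Tf := by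
      refine Finset.disjoint_left.mpr ?_
      intro q hq hq'
      simp only [hSdef, hTdef, Finset.mem_product, Finset.mem_range, Finset.mem_insert,
        Finset.mem_singleton] at hq hq'
      omega
    have hmemS : ∀ s ∈ Finset.range K, ∀ j : Fin n, ∀ c : ℕ, c ≤ 1 →
        ((2*s+r+c, j) : ℕ × Fin n) ∈ S := by
      intro s hs j c hc
      simp only [hSdef, Finset.mem_product, Finset.mem_range] at *
      exact ⟨by omega, Finset.mem_univ _⟩
    have hF : Measurable (fun g : ((q : S) → ℝ) =>
        ∑ s ∈ (Finset.range K).attach,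
          g ⟨(2*(s:ℕ)+r+1, i), hmemS s s.2 i 1 le_rfl⟩
            * g ⟨(2*(s:ℕ)+r, k), hmemS s s.2 k 0 (by norm_num)⟩) :=
      Finset.measurable_sum _ fun s _ => (measurable_pi_apply _).mul (measurable_pi_apply _)
    have hmemT1 : ((2*K+r+1, i) : ℕ × Fin n) ∈ Tf := by
      simp [hTdef]
    have hmemT0 : ((2*K+r, k) : ℕ × Fin n) ∈ Tf := by
      simp [hTdef]
    have hG : Measurable (fun g : ((q : Tf) → ℝ) =>
        g ⟨(2*K+r+1, i), hmemT1⟩ * g ⟨(2*K+r, k), hmemT0⟩) :=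
      (measurable_pi_apply _).mul (measurable_pi_apply _)
    have hind := aux_indep_comp hindep (fun p => hmeas p.1 p.2) S Tf hST hF hG
    have hl : (fun ω => ∑ s ∈ (Finset.range K).attach,
          (fun q : S => v (q : ℕ × Fin n).1 ω (q : ℕ × Fin n).2)
              ⟨(2*(s:ℕ)+r+1, i), hmemS s s.2 i 1 le_rfl⟩
            * (fun q : S => v (q : ℕ × Fin n).1 ω (q : ℕ × Fin n).2)
              ⟨(2*(s:ℕ)+r, k), hmemS s s.2 k 0 (by norm_num)⟩)
        = fun ω => ∑ s ∈ Finset.range K, ζ s ω := by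
      funext ω
      exact Finset.sum_attach _ (fun s => v (2*s+r+1) ω i * v (2*s+r) ω k)
    have hr2 : (fun ω => (fun q : Tf => v (q : ℕ × Fin n).1 ω (q : ℕ × Fin n).2)
            ⟨(2*K+r+1, i), hmemT1⟩
          * (fun q : Tf => v (q : ℕ × Fin n).1 ω (q : ℕ × Fin n).2) ⟨(2*K+r, k), hmemT0⟩)
        = ζ K := rfl
    rw [← hl, ← hr2]
    exact hind

/-- Proposition 3, condition (C2): almost-sure consistency of the shifted data matrix. -/
theorem stmt_13 {Ω : Type*} [MeasurableSpace Ω] (μ : Measure Ω) [IsProbabilityMeasure μ]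
    (n m : ℕ) (σ : ℝ) (hσ : 0 < σ)
    (u : ℕ → Fin m → ℝ) (xo : ℕ → Fin n → ℝ) (v : ℕ → Ω → Fin n → ℝ)
    (hmeas : ∀ t i, Measurable fun ω => v t ω i)
    (hindep : iIndepFun
      (fun (p : ℕ × Fin n) ω => v p.1 ω p.2) μ)
    (hdist : ∀ t i, Measure.map (fun ω => v t ω i) μ
      = gaussianReal 0 ⟨σ ^ 2, sq_nonneg σ⟩)
    (Cu Cx : ℝ) (hu : ∀ t, ‖u t‖ ≤ Cu) (hx : ∀ t, ‖xo t‖ ≤ Cx)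
    -- the noisy shifted data matrix `X̄₁(T) = (1/T)·X₁(T)·Φ(T)ᵀ`
    (X₁bar : ℕ → Ω → Matrix (Fin n) (Fin m ⊕ Fin n) ℝ)
    (hX₁bar : ∀ T ω, X₁bar T ω =
      (T : ℝ)⁻¹ • (colMat (fun t => xo (t + 1) + v (t + 1) ω) T
        * (fromRows (colMat u T) (colMat (fun t => xo t + v t ω) T))ᵀ))
    -- the noise-free shifted data matrix `X̄₁ᵒ(T) = (1/T)·X₁ᵒ(T)·Φᵒ(T)ᵀ`
    (X₁obar : ℕ → Matrix (Fin n) (Fin m ⊕ Fin n) ℝ)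
    (hX₁obar : ∀ T, X₁obar T
      = (T : ℝ)⁻¹ • (colMat (fun t => xo (t + 1)) T
          * (fromRows (colMat u T) (colMat xo T))ᵀ)) :
    ∀ᵐ ω ∂μ, Tendsto (fun T : ℕ => X₁bar T ω - X₁obar T) atTop
      (nhds (0 : Matrix (Fin n) (Fin m ⊕ Fin n) ℝ)) := by

  classical
  have hV : (⟨σ ^ 2, sq_nonneg σ⟩ : ℝ≥0) ≠ 0 := by
    intro h
    have h2 : ((⟨σ ^ 2, sq_nonneg σ⟩ : ℝ≥0) : ℝ) = 0 := by rw [h]; rfl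
    exact (pow_ne_zero 2 hσ.ne') h2
  -- entry formulas
  have hentry1 : ∀ (ω : Ω) (T : ℕ) (l : Fin n) (k : Fin m),
      (X₁bar T ω - X₁obar T) l (Sum.inl k)
        = (T:ℝ)⁻¹ * ∑ t ∈ Finset.range T, u t k * v (t+1) ω l := by
    intro ω T l k
    rw [hX₁bar, hX₁obar]
    simp only [Matrix.sub_apply, Matrix.smul_apply, smul_eq_mul, Matrix.mul_apply,
      Matrix.transpose_apply, Matrix.fromRows_apply_inl, colMat, Matrix.of_apply,
      Pi.add_apply]
    rw [← mul_sub, ← Finset.sum_sub_distrib,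
      ← Fin.sum_univ_eq_sum_range (fun t => u t k * v (t+1) ω l) T]
    congr 1
    refine Finset.sum_congr rfl fun t _ => ?_
    ring
  have hentry2 : ∀ (ω : Ω) (T : ℕ) (l : Fin n) (k : Fin n),
      (X₁bar T ω - X₁obar T) l (Sum.inr k)
        = (T:ℝ)⁻¹ * ∑ t ∈ Finset.range T, xo t k * v (t+1) ω l
          + ((T:ℝ)⁻¹ * ∑ t ∈ Finset.range T, xo (t+1) l * v t ω k
          + (T:ℝ)⁻¹ * ∑ t ∈ Finset.range T, v (t+1) ω l * v t ω k) := by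
    intro ω T l k
    rw [hX₁bar, hX₁obar]
    simp only [Matrix.sub_apply, Matrix.smul_apply, smul_eq_mul, Matrix.mul_apply,
      Matrix.transpose_apply, Matrix.fromRows_apply_inr, colMat, Matrix.of_apply,
      Pi.add_apply]
    rw [← mul_sub, ← Finset.sum_sub_distrib, ← mul_add, ← mul_add,
      ← Finset.sum_add_distrib, ← Finset.sum_add_distrib,
      ← Fin.sum_univ_eq_sum_range (fun t => xo t k * v (t+1) ω l
        + (xo (t+1) l * v t ω k + v (t+1) ω l * v t ω k)) T]
    congr 1
    refine Finset.sum_congr rfl fun t _ => ?_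
    ring
  -- bounds on the deterministic weights
  have hCu : ∀ (t : ℕ) (k : Fin m), |u t k| ≤ Cu := fun t k => by
    calc |u t k| = ‖u t k‖ := (Real.norm_eq_abs _).symm
      _ ≤ ‖u t‖ := norm_le_pi_norm (u t) k
      _ ≤ Cu := hu t
  have hCx : ∀ (t : ℕ) (k : Fin n), |xo t k| ≤ Cx := fun t k => by
    calc |xo t k| = ‖xo t k‖ := (Real.norm_eq_abs _).symm
      _ ≤ ‖xo t‖ := norm_le_pi_norm (xo t) k
      _ ≤ Cx := hx t
  -- the a.e. limits
  have hA1 : ∀ᵐ ω ∂μ, ∀ (l : Fin n) (k : Fin m),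
      Tendsto (fun T : ℕ => (T:ℝ)⁻¹ * ∑ t ∈ Finset.range T, u t k * v (t+1) ω l)
        atTop (nhds 0) :=
    ae_all_iff.mpr fun l => ae_all_iff.mpr fun k =>
      aux_appA hV v hmeas hindep hdist 1 l (fun t => u t k) Cu (fun t => hCu t k)
  have hA2 : ∀ᵐ ω ∂μ, ∀ (l : Fin n) (k : Fin n),
      Tendsto (fun T : ℕ => (T:ℝ)⁻¹ * ∑ t ∈ Finset.range T, xo t k * v (t+1) ω l)
        atTop (nhds 0) :=
    ae_all_iff.mpr fun l => ae_all_iff.mpr fun k =>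
      aux_appA hV v hmeas hindep hdist 1 l (fun t => xo t k) Cx (fun t => hCx t k)
  have hA3 : ∀ᵐ ω ∂μ, ∀ (l : Fin n) (k : Fin n),
      Tendsto (fun T : ℕ => (T:ℝ)⁻¹ * ∑ t ∈ Finset.range T, xo (t+1) l * v t ω k)
        atTop (nhds 0) :=
    ae_all_iff.mpr fun l => ae_all_iff.mpr fun k =>
      aux_appA hV v hmeas hindep hdist 0 k (fun t => xo (t+1) l) Cx (fun t => hCx (t+1) l)
  have hB0 : ∀ᵐ ω ∂μ, ∀ (l : Fin n) (k : Fin n),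
      Tendsto (fun K : ℕ => (K:ℝ)⁻¹ * ∑ s ∈ Finset.range K, v (2*s+1) ω l * v (2*s) ω k)
        atTop (nhds 0) :=
    ae_all_iff.mpr fun l => ae_all_iff.mpr fun k =>
      aux_appB hV v hmeas hindep hdist 0 l k
  have hB1 : ∀ᵐ ω ∂μ, ∀ (l : Fin n) (k : Fin n),
      Tendsto (fun K : ℕ => (K:ℝ)⁻¹ * ∑ s ∈ Finset.range K, v (2*s+1+1) ω l * v (2*s+1) ω k)
        atTop (nhds 0) :=
    ae_all_iff.mpr fun l => ae_all_iff.mpr fun k =>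
      aux_appB hV v hmeas hindep hdist 1 l k
  filter_upwards [hA1, hA2, hA3, hB0, hB1] with ω h1 h2 h3 hb0 hb1
  rw [show (Tendsto (fun T : ℕ => X₁bar T ω - X₁obar T) atTop
      (nhds (0 : Matrix (Fin n) (Fin m ⊕ Fin n) ℝ)))
    = Tendsto (fun T : ℕ => (fun l j => (X₁bar T ω - X₁obar T) l j))
        atTop (nhds (fun _ _ => (0:ℝ))) from rfl]
  rw [tendsto_pi_nhds]
  intro l
  rw [tendsto_pi_nhds]
  intro j
  cases j with
  | inl k =>
    exact (h1 l k).congr fun T => (hentry1 ω T l k).symm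
  | inr k =>
    have hw : Tendsto (fun T : ℕ =>
        (T:ℝ)⁻¹ * ∑ t ∈ Finset.range T, v (t+1) ω l * v t ω k) atTop (nhds 0) :=
      aux_par (fun t => v (t+1) ω l * v t ω k) (hb0 l k) (hb1 l k)
    have := (h2 l k).add ((h3 l k).add hw)
    rw [add_zero, add_zero] at this
    exact this.congr fun T => (hentry2 ω T l k).symm
end

section
/- (Proposition in Section IV-B: almost-sure consistency of the instrumental-variable matrices.) Let (v(t))_{t∈ℕ} and (ṽ(t))_{t∈ℕ} be random vectors in ℝⁿ whose scalar components, taken jointly over both families, all times, and all coordinates, form a mutually independent family, each distributed N(0, σ²). Assume there exist C_u, C_x such that ‖u(t)‖ ≤ C_u and ‖xᵒ(t)‖ ≤ C_x for all t. For each T ≥ 1 form U₀(T), X₀ᵒ(T), X₁ᵒ(T), V₀(T), V₁(T), Ṽ₀(T) whose columns are u(0),…,u(T−1); xᵒ(0),…,xᵒ(T−1); xᵒ(1),…,xᵒ(T); v(0),…,v(T−1); v(1),…,v(T); ṽ(0),…,ṽ(T−1), respectively. Set X₀(T) := X₀ᵒ(T) + V₀(T), X₁(T) := X₁ᵒ(T)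 + V₁(T), X₀ⁱᵛ(T) := X₀ᵒ(T) + Ṽ₀(T), Φⁱᵛ(T) := [U₀(T); X₀ⁱᵛ(T)], Φᵒ(T) := [U₀(T); X₀ᵒ(T)], X̄₀ⁱᵛ(T) := (1/T)·X₀(T)·(Φⁱᵛ(T))ᵀ, X̄₁ⁱᵛ(T) := (1/T)·X₁(T)·(Φⁱᵛ(T))ᵀ, X̄₀ᵒ(T) := (1/T)·X₀ᵒ(T)·(Φᵒ(T))ᵀ, X̄₁ᵒ(T) := (1/T)·X₁ᵒ(T)·(Φᵒ(T))ᵀ. Then, almost surely, X̄₀ⁱᵛ(T) − X̄₀ᵒ(T) → 0 and X̄₁ⁱᵛ(T) − X̄₁ᵒ(T) → 0 as T → ∞. -/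
open Matrix MeasureTheory ProbabilityTheory Filter
open scoped NNReal ENNReal

section Aux

open Real

variable {Ω : Type*} [MeasurableSpace Ω] {μ : Measure Ω} [IsProbabilityMeasure μ]

lemma gauss_integrable_pow {σ : ℝ} (hσ : 0 < σ) (k : ℕ) :
    Integrable (fun x : ℝ => x ^ k) (gaussianReal 0 ⟨σ ^ 2, sq_nonneg σ⟩) := by
  set V : ℝ≥0 := ⟨σ ^ 2, sq_nonneg σ⟩ with hVdef
  have hVR : (V : ℝ) = σ ^ 2 := rfl
  have hVpos : (0 : ℝ) < (V : ℝ) := by rw [hVR]; positivity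
  have hV0 : V ≠ 0 := by
    intro h
    rw [← NNReal.coe_eq_zero, hVR] at h
    exact absurd h (by positivity)
  rw [gaussianReal_of_var_ne_zero 0 hV0]
  rw [integrable_withDensity_iff (measurable_gaussianPDF 0 V)
    (Filter.Eventually.of_forall fun x => ENNReal.ofReal_lt_top)]
  have hb : (0 : ℝ) < (2 * (V : ℝ))⁻¹ := by positivity
  have base : Integrable (fun x : ℝ => x ^ k * Real.exp (-(2 * (V : ℝ))⁻¹ * x ^ 2)) := by
    have h := integrable_rpow_mul_exp_neg_mul_sq hb (s := (k : ℝ))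
      (lt_of_lt_of_le neg_one_lt_zero (Nat.cast_nonneg k))
    exact h.congr (Filter.Eventually.of_forall fun x => by
      show x ^ ((k : ℕ) : ℝ) * _ = _
      rw [Real.rpow_natCast])
  have hint := base.const_mul (Real.sqrt (2 * π * (V : ℝ)))⁻¹
  refine hint.congr (Filter.Eventually.of_forall fun x => ?_)
  show (Real.sqrt (2 * π * (V : ℝ)))⁻¹ * (x ^ k * Real.exp (-(2 * (V : ℝ))⁻¹ * x ^ 2))
      = x ^ k * (gaussianPDF 0 V x).toReal
  rw [show gaussianPDF 0 V x = ENNReal.ofReal (gaussianPDFReal 0 V x) from rfl,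
    ENNReal.toReal_ofReal (gaussianPDFReal_nonneg _ _ _),
    show gaussianPDFReal 0 V x
      = (Real.sqrt (2 * π * (V : ℝ)))⁻¹ * Real.exp (-(x - 0) ^ 2 / (2 * (V : ℝ))) from rfl]
  have harg : -(2 * (V : ℝ))⁻¹ * x ^ 2 = -(x - 0) ^ 2 / (2 * (V : ℝ)) := by
    field_simp
    ring
  rw [harg]
  ring

lemma gauss_mean {σ : ℝ} (hσ : 0 < σ) :
    ∫ x, x ∂(gaussianReal 0 ⟨σ ^ 2, sq_nonneg σ⟩) = 0 := by
  have h1 : Integrable (fun x : ℝ => x) (gaussianReal 0 ⟨σ ^ 2, sq_nonneg σ⟩) := by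
    simpa using gauss_integrable_pow hσ 1
  have hmap : (gaussianReal 0 ⟨σ ^ 2, sq_nonneg σ⟩).map (fun x => (-1 : ℝ) * x)
      = gaussianReal 0 ⟨σ ^ 2, sq_nonneg σ⟩ := by
    have := gaussianReal_map_const_mul (μ := 0) (v := ⟨σ ^ 2, sq_nonneg σ⟩) (-1 : ℝ)
    have h2 : ∀ h, (NNReal.mk ((-1 : ℝ) ^ 2) h) = 1 := fun h => by
      ext; norm_num
    simp only [h2, one_mul, mul_zero] at this
    exact this.trans (congrArg (gaussianReal 0) (one_mul (M := ℝ≥0) _))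
  have key : ∫ x, x ∂(gaussianReal 0 ⟨σ ^ 2, sq_nonneg σ⟩)
      = ∫ x, (-1 : ℝ) * x ∂(gaussianReal 0 ⟨σ ^ 2, sq_nonneg σ⟩) := by
    conv_lhs => rw [← hmap]
    exact integral_map (f := fun x => x) ((measurable_id.const_mul (-1 : ℝ)).aemeasurable)
      aestronglyMeasurable_id
  have : ∫ x, (-1 : ℝ) * x ∂(gaussianReal 0 ⟨σ ^ 2, sq_nonneg σ⟩)
      = -∫ x, x ∂(gaussianReal 0 ⟨σ ^ 2, sq_nonneg σ⟩) := by
    rw [integral_const_mul]; ring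
  rw [this] at key
  linarith

lemma memLp_four_of_integrable_pow {α : Type*} [MeasurableSpace α] {ν : Measure α} {f : α → ℝ}
    (hm : AEStronglyMeasurable f ν) (h : Integrable (fun x => f x ^ 4) ν) :
    MemLp f 4 ν := by
  have h1 : MemLp (fun x => ‖f x‖ ^ ((4 : ℝ≥0∞).toReal)) ((4 : ℝ≥0∞) / 4) ν := by
    have h44 : (4 : ℝ≥0∞) / 4 = 1 := ENNReal.div_self (by norm_num) (by norm_num)
    rw [h44, memLp_one_iff_integrable]
    refine h.congr (Filter.Eventually.of_forall fun x => ?_)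
    show f x ^ 4 = ‖f x‖ ^ (4 : ℝ≥0∞).toReal
    rw [Real.norm_eq_abs, show ((4 : ℝ≥0∞).toReal) = ((4 : ℕ) : ℝ) by norm_num,
      Real.rpow_natCast, ← abs_pow, abs_of_nonneg (by positivity : (0:ℝ) ≤ f x ^ 4)]
  exact (memLp_norm_rpow_iff hm (by norm_num) (by norm_num)).1 h1

lemma integrable_pow_of_memLp_four {f : Ω → ℝ} (hf : MemLp f 4 μ) {k : ℕ} (hk : k ≤ 4) :
    Integrable (fun ω => f ω ^ k) μ := by
  have h4 : Integrable (fun ω => f ω ^ 4) μ := by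
    have h := hf.integrable_norm_rpow (by norm_num) (by norm_num)
    refine h.congr (Filter.Eventually.of_forall fun ω => ?_)
    show ‖f ω‖ ^ (4 : ℝ≥0∞).toReal = f ω ^ 4
    rw [Real.norm_eq_abs, show ((4 : ℝ≥0∞).toReal) = ((4 : ℕ) : ℝ) by norm_num,
      Real.rpow_natCast, ← abs_pow, abs_of_nonneg (by positivity : (0:ℝ) ≤ f ω ^ 4)]
  refine (h4.add (integrable_const 1)).mono' ?_ (Filter.Eventually.of_forall fun ω => ?_)
  · exact hf.aestronglyMeasurable.pow k
  · simp only [Pi.add_apply]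
    rw [Real.norm_eq_abs, abs_pow]
    have habs : |f ω| ^ 4 = f ω ^ 4 := by
      rw [← abs_pow, abs_of_nonneg (by positivity : (0:ℝ) ≤ f ω ^ 4)]
    rcases le_total (|f ω|) 1 with hle | hle
    · have h1 : |f ω| ^ k ≤ 1 := pow_le_one₀ (abs_nonneg _) hle
      have h0 : (0:ℝ) ≤ f ω ^ 4 := by positivity
      linarith
    · have h1 : |f ω| ^ k ≤ |f ω| ^ 4 := pow_le_pow_right₀ hle hk
      linarith [habs ▸ h1]

/-- Fourth-moment strong law of large numbers for independent, mean-zero sequences with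
uniformly bounded second and fourth moments. -/
lemma slln4 {Y : ℕ → Ω → ℝ} (hY4 : ∀ t, MemLp (Y t) 4 μ)
    (hind : ∀ T, IndepFun (fun ω => ∑ t ∈ Finset.range T, Y t ω) (Y T) μ)
    (hmean : ∀ t, ∫ ω, Y t ω ∂μ = 0)
    {B C : ℝ} (hB : ∀ t, ∫ ω, Y t ω ^ 2 ∂μ ≤ B) (hC : ∀ t, ∫ ω, Y t ω ^ 4 ∂μ ≤ C) :
    ∀ᵐ ω ∂μ, Tendsto (fun T : ℕ => (T : ℝ)⁻¹ * ∑ t ∈ Finset.range T, Y t ω) atTop (nhds 0) := by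
  have hB0 : 0 ≤ B := le_trans (integral_nonneg fun ω => by positivity) (hB 0)
  have hC0 : 0 ≤ C := le_trans (integral_nonneg fun ω => by positivity) (hC 0)
  set S : ℕ → Ω → ℝ := fun T ω => ∑ t ∈ Finset.range T, Y t ω with hS
  have hYint : ∀ t, Integrable (Y t) μ := fun t => (hY4 t).integrable (by norm_num)
  have hSmem : ∀ T, MemLp (S T) 4 μ := fun T =>
    memLp_finset_sum (Finset.range T) fun t _ => hY4 t
  have hSaesm : ∀ T, AEStronglyMeasurable (S T) μ := fun T => (hSmem T).aestronglyMeasurable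
  have hSint : ∀ T, Integrable (S T) μ := fun T => (hSmem T).integrable (by norm_num)
  have hSmean : ∀ T, ∫ ω, S T ω ∂μ = 0 := by
    intro T
    simp only [hS]
    rw [integral_finset_sum _ fun t _ => hYint t]
    exact Finset.sum_eq_zero fun t _ => hmean t
  have hindp : ∀ T (a b : ℕ), IndepFun (fun ω => S T ω ^ a) (fun ω => Y T ω ^ b) μ :=
    fun T a b => (hind T).comp (measurable_id.pow_const a) (measurable_id.pow_const b)
  have hprod : ∀ T (a b : ℕ), ∫ ω, S T ω ^ a * Y T ω ^ b ∂μ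
      = (∫ ω, S T ω ^ a ∂μ) * ∫ ω, Y T ω ^ b ∂μ := fun T a b =>
    (hindp T a b).integral_mul_eq_mul_integral ((hSaesm T).pow a) ((hY4 T).aestronglyMeasurable.pow b)
  have hSint2 : ∀ T (a : ℕ), a ≤ 4 → Integrable (fun ω => S T ω ^ a) μ :=
    fun T a ha => integrable_pow_of_memLp_four (hSmem T) ha
  have hYint2 : ∀ T (a : ℕ), a ≤ 4 → Integrable (fun ω => Y T ω ^ a) μ :=
    fun T a ha => integrable_pow_of_memLp_four (hY4 T) ha
  have hprodint : ∀ T (a b : ℕ), a ≤ 4 → b ≤ 4 →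
      Integrable (fun ω => S T ω ^ a * Y T ω ^ b) μ :=
    fun T a b ha hb => (hindp T a b).integrable_mul (hSint2 T a ha) (hYint2 T b hb)
  have hY1 : ∀ T, ∫ ω, Y T ω ^ 1 ∂μ = 0 := fun T => by simpa using hmean T
  have hS1 : ∀ T, ∫ ω, S T ω ^ 1 ∂μ = 0 := fun T => by simpa using hSmean T
  have hSnn2 : ∀ T, 0 ≤ ∫ ω, S T ω ^ 2 ∂μ := fun T => integral_nonneg fun ω => by positivity
  have hYnn2 : ∀ T, 0 ≤ ∫ ω, Y T ω ^ 2 ∂μ := fun T => integral_nonneg fun ω => by positivity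
  -- second moment bound
  have hS2 : ∀ T, ∫ ω, S T ω ^ 2 ∂μ ≤ B * T := by
    intro T
    induction T with
    | zero => simp [hS]
    | succ T ih =>
      have hstep : ∀ ω, S (T + 1) ω = S T ω + Y T ω := fun ω => Finset.sum_range_succ _ _
      have e1 : ∀ ω, S (T + 1) ω ^ 2
          = S T ω ^ 2 + 2 * (S T ω ^ 1 * Y T ω ^ 1) + Y T ω ^ 2 := by
        intro ω; rw [hstep ω]; ring
      have i2 := hSint2 T 2 (by norm_num)
      have i11 := (hprodint T 1 1 (by norm_num) (by norm_num)).const_mul 2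
      have iY2 := hYint2 T 2 (by norm_num)
      have E1 : ∫ ω, (S T ω ^ 2 + 2 * (S T ω ^ 1 * Y T ω ^ 1) + Y T ω ^ 2) ∂μ
          = (∫ ω, (S T ω ^ 2 + 2 * (S T ω ^ 1 * Y T ω ^ 1)) ∂μ) + ∫ ω, Y T ω ^ 2 ∂μ :=
        integral_add (i2.add i11) iY2
      have E2 : ∫ ω, (S T ω ^ 2 + 2 * (S T ω ^ 1 * Y T ω ^ 1)) ∂μ
          = (∫ ω, S T ω ^ 2 ∂μ) + ∫ ω, 2 * (S T ω ^ 1 * Y T ω ^ 1) ∂μ :=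
        integral_add i2 i11
      have E3 : ∫ ω, 2 * (S T ω ^ 1 * Y T ω ^ 1) ∂μ
          = 2 * ∫ ω, S T ω ^ 1 * Y T ω ^ 1 ∂μ := integral_const_mul 2 _
      have E : ∫ ω, S (T + 1) ω ^ 2 ∂μ
          = (∫ ω, S T ω ^ 2 ∂μ) + 2 * ∫ ω, S T ω ^ 1 * Y T ω ^ 1 ∂μ
            + ∫ ω, Y T ω ^ 2 ∂μ := by
        rw [integral_congr_ae (Filter.Eventually.of_forall e1), E1, E2, E3]
      rw [E, hprod T 1 1, hY1 T]
      push_cast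
      nlinarith [hB T]
  -- fourth moment bound
  have hS4 : ∀ T, ∫ ω, S T ω ^ 4 ∂μ ≤ (3 * B ^ 2 + C) * (T : ℝ) ^ 2 := by
    intro T
    induction T with
    | zero => simp [hS]
    | succ T ih =>
      have hstep : ∀ ω, S (T + 1) ω = S T ω + Y T ω := fun ω => Finset.sum_range_succ _ _
      have e1 : ∀ ω, S (T + 1) ω ^ 4
          = S T ω ^ 4 + 4 * (S T ω ^ 3 * Y T ω ^ 1) + 6 * (S T ω ^ 2 * Y T ω ^ 2)
            + 4 * (S T ω ^ 1 * Y T ω ^ 3) + Y T ω ^ 4 := by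
        intro ω; rw [hstep ω]; ring
      have i4 := hSint2 T 4 le_rfl
      have i31 := (hprodint T 3 1 (by norm_num) (by norm_num)).const_mul 4
      have i22 := (hprodint T 2 2 (by norm_num) (by norm_num)).const_mul 6
      have i13 := (hprodint T 1 3 (by norm_num) (by norm_num)).const_mul 4
      have iY4 := hYint2 T 4 le_rfl
      have E1 : ∫ ω, (S T ω ^ 4 + 4 * (S T ω ^ 3 * Y T ω ^ 1) + 6 * (S T ω ^ 2 * Y T ω ^ 2)
            + 4 * (S T ω ^ 1 * Y T ω ^ 3) + Y T ω ^ 4) ∂μ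
          = (∫ ω, (S T ω ^ 4 + 4 * (S T ω ^ 3 * Y T ω ^ 1) + 6 * (S T ω ^ 2 * Y T ω ^ 2)
            + 4 * (S T ω ^ 1 * Y T ω ^ 3)) ∂μ) + ∫ ω, Y T ω ^ 4 ∂μ :=
        integral_add (((i4.add i31).add i22).add i13) iY4
      have E2 : ∫ ω, (S T ω ^ 4 + 4 * (S T ω ^ 3 * Y T ω ^ 1) + 6 * (S T ω ^ 2 * Y T ω ^ 2)
            + 4 * (S T ω ^ 1 * Y T ω ^ 3)) ∂μ
          = (∫ ω, (S T ω ^ 4 + 4 * (S T ω ^ 3 * Y T ω ^ 1)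
              + 6 * (S T ω ^ 2 * Y T ω ^ 2)) ∂μ) + ∫ ω, 4 * (S T ω ^ 1 * Y T ω ^ 3) ∂μ :=
        integral_add ((i4.add i31).add i22) i13
      have E3 : ∫ ω, (S T ω ^ 4 + 4 * (S T ω ^ 3 * Y T ω ^ 1)
            + 6 * (S T ω ^ 2 * Y T ω ^ 2)) ∂μ
          = (∫ ω, (S T ω ^ 4 + 4 * (S T ω ^ 3 * Y T ω ^ 1)) ∂μ)
            + ∫ ω, 6 * (S T ω ^ 2 * Y T ω ^ 2) ∂μ :=
        integral_add (i4.add i31) i22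
      have E4 : ∫ ω, (S T ω ^ 4 + 4 * (S T ω ^ 3 * Y T ω ^ 1)) ∂μ
          = (∫ ω, S T ω ^ 4 ∂μ) + ∫ ω, 4 * (S T ω ^ 3 * Y T ω ^ 1) ∂μ :=
        integral_add i4 i31
      have E : ∫ ω, S (T + 1) ω ^ 4 ∂μ
          = (∫ ω, S T ω ^ 4 ∂μ) + 4 * ∫ ω, S T ω ^ 3 * Y T ω ^ 1 ∂μ
            + 6 * ∫ ω, S T ω ^ 2 * Y T ω ^ 2 ∂μ
            + 4 * ∫ ω, S T ω ^ 1 * Y T ω ^ 3 ∂μ + ∫ ω, Y T ω ^ 4 ∂μ := by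
        rw [integral_congr_ae (Filter.Eventually.of_forall e1), E1, E2, E3, E4,
          integral_const_mul, integral_const_mul, integral_const_mul]
      rw [E, hprod T 3 1, hprod T 2 2, hprod T 1 3, hY1 T, hS1 T]
      have hcross : (∫ ω, S T ω ^ 2 ∂μ) * ∫ ω, Y T ω ^ 2 ∂μ ≤ (B * T) * B := by
        apply mul_le_mul (hS2 T) (hB T) (hYnn2 T)
        positivity
      push_cast
      nlinarith [hC T, Nat.cast_nonneg (α := ℝ) T]
  -- Markov + Borel–Cantelli
  set K := 3 * B ^ 2 + C with hK
  have hK0 : 0 ≤ K := by positivity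
  have main : ∀ (ε : ℝ), 0 < ε →
      ∀ᵐ ω ∂μ, ∀ᶠ T : ℕ in atTop, |(T : ℝ)⁻¹ * S T ω| < ε := by
    intro ε hε
    set A : ℕ → Set Ω := fun T => {ω | ε ≤ |(T : ℝ)⁻¹ * S T ω|} with hA
    have hbound : ∀ T : ℕ, μ (A T) ≤ ENNReal.ofReal (K / ε ^ 4 * (1 / (T : ℝ) ^ 2)) := by
      intro T
      rcases Nat.eq_zero_or_pos T with rfl | hT
      · have hempty : A 0 = ∅ := by
          ext ω
          simp [hA, hS, not_le.2 hε]
        simp [hempty]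
      · have hTpos : (0 : ℝ) < T := by exact_mod_cast hT
        have hmeasf : AEMeasurable (fun ω => ENNReal.ofReal (S T ω ^ 4)) μ :=
          ((hSaesm T).aemeasurable.pow_const 4).ennreal_ofReal
        have hsub : A T ⊆ {ω | ENNReal.ofReal ((ε * T) ^ 4) ≤ ENNReal.ofReal (S T ω ^ 4)} := by
          intro ω hω
          simp only [hA, Set.mem_setOf_eq] at hω ⊢
          refine ENNReal.ofReal_le_ofReal ?_
          have h1 : ε * T ≤ |S T ω| := by
            rw [abs_mul, abs_inv, abs_of_nonneg hTpos.le, inv_mul_eq_div] at hω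
            exact (le_div_iff₀ hTpos).1 hω
          calc (ε * T) ^ 4 ≤ |S T ω| ^ 4 := by
                apply pow_le_pow_left₀ (by positivity) h1
            _ = S T ω ^ 4 := by
                rw [← abs_pow, abs_of_nonneg (by positivity : (0:ℝ) ≤ S T ω ^ 4)]
        have hmarkov := mul_meas_ge_le_lintegral₀ hmeasf (ENNReal.ofReal ((ε * T) ^ 4))
        have hlint : ∫⁻ ω, ENNReal.ofReal (S T ω ^ 4) ∂μ ≤ ENNReal.ofReal (K * (T : ℝ) ^ 2) := by
          rw [← ofReal_integral_eq_lintegral_ofReal (hSint2 T 4 le_rfl)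
            (Filter.Eventually.of_forall fun ω => by positivity)]
          exact ENNReal.ofReal_le_ofReal (hS4 T)
        have hne0 : ENNReal.ofReal ((ε * T) ^ 4) ≠ 0 := by
          rw [ne_eq, ENNReal.ofReal_eq_zero, not_le]
          positivity
        have hmu : μ (A T) ≤ ENNReal.ofReal (K * (T : ℝ) ^ 2) / ENNReal.ofReal ((ε * T) ^ 4) := by
          rw [ENNReal.le_div_iff_mul_le (Or.inl hne0) (Or.inl ENNReal.ofReal_ne_top)]
          calc μ (A T) * ENNReal.ofReal ((ε * T) ^ 4)
              ≤ μ {ω | ENNReal.ofReal ((ε * T) ^ 4) ≤ ENNReal.ofReal (S T ω ^ 4)}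
                * ENNReal.ofReal ((ε * T) ^ 4) :=
                mul_le_mul_left (measure_mono hsub) _
            _ = ENNReal.ofReal ((ε * T) ^ 4)
                * μ {ω | ENNReal.ofReal ((ε * T) ^ 4) ≤ ENNReal.ofReal (S T ω ^ 4)} :=
                mul_comm _ _
            _ ≤ ∫⁻ ω, ENNReal.ofReal (S T ω ^ 4) ∂μ := hmarkov
            _ ≤ ENNReal.ofReal (K * (T : ℝ) ^ 2) := hlint
        refine hmu.trans (le_of_eq ?_)
        rw [← ENNReal.ofReal_div_of_pos (by positivity : (0:ℝ) < (ε * T) ^ 4)]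
        congr 1
        field_simp
    have hsummable : Summable (fun T : ℕ => K / ε ^ 4 * (1 / (T : ℝ) ^ 2)) :=
      (Real.summable_one_div_nat_pow.2 one_lt_two).mul_left _
    have hsum : (∑' T, μ (A T)) ≠ ∞ := by
      refine ne_top_of_le_ne_top ?_ (ENNReal.tsum_le_tsum hbound)
      rw [← ENNReal.ofReal_tsum_of_nonneg (fun T => by positivity) hsummable]
      exact ENNReal.ofReal_ne_top
    filter_upwards [ae_eventually_notMem hsum] with ω hω
    filter_upwards [hω] with T hT
    simpa [hA, not_le] using hT
  have hseq : ∀ᵐ ω ∂μ, ∀ j : ℕ, ∀ᶠ T : ℕ in atTop,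
      |(T : ℝ)⁻¹ * S T ω| < 1 / ((j : ℝ) + 1) := by
    rw [ae_all_iff]
    intro j
    exact main _ (by positivity)
  filter_upwards [hseq] with ω hω
  rw [NormedAddCommGroup.tendsto_nhds_zero]
  intro ε hε
  obtain ⟨j, hj⟩ := exists_nat_one_div_lt hε
  filter_upwards [hω j] with T hT
  rw [Real.norm_eq_abs]
  exact hT.trans hj

/-- If each `Y t` is a measurable function of the atoms in `A t`, and the `A t` are pairwise
disjoint, then the partial sum of `Y` below `T` is independent of `Y T`. -/
lemma indepFun_sum_of_disjoint_atoms {ι : Type*} {f : ι → Ω → ℝ}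
    (hf : iIndepFun f μ)
    (hfm : ∀ p, Measurable (f p))
    (Y : ℕ → Ω → ℝ) (A : ℕ → Finset ι)
    (hdisj : ∀ s t : ℕ, s ≠ t → Disjoint (A s) (A t))
    (hY : ∀ t : ℕ, ∃ φ : (↥(A t) → ℝ) → ℝ,
      Measurable φ ∧ ∀ ω, Y t ω = φ (fun p : ↥(A t) => f p ω))
    (T : ℕ) :
    IndepFun (fun ω => ∑ t ∈ Finset.range T, Y t ω) (Y T) μ := by
  classical
  choose φ hφm hφe using hY
  set S : Finset ι := (Finset.range T).biUnion A with hSdef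
  have hST : Disjoint S (A T) := by
    rw [Finset.disjoint_biUnion_left]
    intro t ht
    exact hdisj t T (Nat.ne_of_lt (Finset.mem_range.1 ht))
  have base := hf.indepFun_finset S (A T) hST hfm
  set Φ : (↥S → ℝ) → ℝ := fun h => ∑ t ∈ (Finset.range T).attach,
      φ t.1 (fun p => h ⟨p.1, Finset.mem_biUnion.2 ⟨t.1, t.2, p.2⟩⟩) with hΦdef
  have hΦm : Measurable Φ := by
    apply Finset.measurable_sum
    intro t _
    exact (hφm t.1).comp (measurable_pi_lambda _ fun p => measurable_pi_apply _)
  have key := base.comp hΦm (hφm T)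
  have e1 : (Φ ∘ fun ω (i : ↥S) => f i ω)
      = fun ω => ∑ t ∈ Finset.range T, Y t ω := by
    funext ω
    show (∑ t ∈ (Finset.range T).attach, φ t.1 (fun p => f p.1 ω)) = _
    rw [← Finset.sum_attach (Finset.range T) (fun t => Y t ω)]
    exact Finset.sum_congr rfl fun t _ => (hφe t.1 ω).symm
  have e2 : ((φ T) ∘ fun ω (i : ↥(A T)) => f i ω) = Y T := by
    funext ω
    exact (hφe T ω).symm
  rw [e1, e2] at key
  exact key

/-- SLLN for bounded deterministic weights times independent mean-zero atoms. -/
lemma slln_weighted {ι : Type*} {f : ι → Ω → ℝ}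
    (hf : iIndepFun f μ)
    (hfm : ∀ p, Measurable (f p))
    (hmem : ∀ p, MemLp (f p) 4 μ) (hmean : ∀ p, ∫ ω, f p ω ∂μ = 0)
    {γB γC : ℝ} (h2 : ∀ p, ∫ ω, f p ω ^ 2 ∂μ = γB) (h4 : ∀ p, ∫ ω, f p ω ^ 4 ∂μ = γC)
    (g : ℕ → ι) (hg : Function.Injective g) (c : ℕ → ℝ) (M : ℝ) (hc : ∀ t, |c t| ≤ M) :
    ∀ᵐ ω ∂μ, Tendsto (fun T : ℕ => (T : ℝ)⁻¹ * ∑ t ∈ Finset.range T, c t * f (g t) ω)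
      atTop (nhds 0) := by
  have hγB : 0 ≤ γB := (h2 (g 0)) ▸ integral_nonneg fun ω => by positivity
  have hγC : 0 ≤ γC := (h4 (g 0)) ▸ integral_nonneg fun ω => by positivity
  have hc2 : ∀ t, c t ^ 2 ≤ M ^ 2 := by
    intro t
    nlinarith [hc t, abs_nonneg (c t), sq_abs (c t)]
  have hc4 : ∀ t, c t ^ 4 ≤ M ^ 4 := by
    intro t
    nlinarith [hc2 t, sq_nonneg (c t), sq_nonneg M]
  refine slln4 (Y := fun t ω => c t * f (g t) ω) (B := M ^ 2 * γB) (C := M ^ 4 * γC)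
    ?_ ?_ ?_ ?_ ?_
  · intro t
    exact (hmem (g t)).const_mul (c t)
  · intro T
    apply indepFun_sum_of_disjoint_atoms hf hfm _ (fun t => {g t})
    · intro s t hst
      rw [Finset.disjoint_singleton]
      exact fun h => hst (hg h)
    · intro t
      exact ⟨fun h => c t * h ⟨g t, Finset.mem_singleton_self _⟩,
        (measurable_pi_apply _).const_mul _, fun ω => rfl⟩
  · intro t
    rw [integral_const_mul, hmean (g t), mul_zero]
  · intro t
    have e : ∀ ω, (c t * f (g t) ω) ^ 2 = c t ^ 2 * f (g t) ω ^ 2 := fun ω => by ring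
    rw [integral_congr_ae (Filter.Eventually.of_forall e), integral_const_mul, h2 (g t)]
    exact mul_le_mul_of_nonneg_right (hc2 t) hγB
  · intro t
    have e : ∀ ω, (c t * f (g t) ω) ^ 4 = c t ^ 4 * f (g t) ω ^ 4 := fun ω => by ring
    rw [integral_congr_ae (Filter.Eventually.of_forall e), integral_const_mul, h4 (g t)]
    exact mul_le_mul_of_nonneg_right (hc4 t) hγC

/-- SLLN for products of two disjoint families of independent mean-zero atoms. -/
lemma slln_prod {ι : Type*} {f : ι → Ω → ℝ}
    (hf : iIndepFun f μ)
    (hfm : ∀ p, Measurable (f p))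
    (hmem : ∀ p, MemLp (f p) 4 μ) (hmean : ∀ p, ∫ ω, f p ω ∂μ = 0)
    {γB γC : ℝ} (h2 : ∀ p, ∫ ω, f p ω ^ 2 ∂μ = γB) (h4 : ∀ p, ∫ ω, f p ω ^ 4 ∂μ = γC)
    (g1 g2 : ℕ → ι) (hg1 : Function.Injective g1) (hg2 : Function.Injective g2)
    (h12 : ∀ a b, g1 a ≠ g2 b) :
    ∀ᵐ ω ∂μ, Tendsto (fun T : ℕ => (T : ℝ)⁻¹ * ∑ t ∈ Finset.range T, f (g1 t) ω * f (g2 t) ω)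
      atTop (nhds 0) := by
  classical
  have hpair : ∀ t, IndepFun (f (g1 t)) (f (g2 t)) μ := fun t => hf.indepFun (h12 t t)
  have hppow : ∀ t (a b : ℕ),
      IndepFun (fun ω => f (g1 t) ω ^ a) (fun ω => f (g2 t) ω ^ b) μ :=
    fun t a b => (hpair t).comp (measurable_id.pow_const a) (measurable_id.pow_const b)
  have hint : ∀ p (a : ℕ), a ≤ 4 → Integrable (fun ω => f p ω ^ a) μ :=
    fun p a ha => integrable_pow_of_memLp_four (hmem p) ha
  have haesm : ∀ p (a : ℕ), AEStronglyMeasurable (fun ω => f p ω ^ a) μ :=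
    fun p a => ((hfm p).pow_const a).aestronglyMeasurable
  have hmoment : ∀ t (a : ℕ), ∫ ω, (f (g1 t) ω * f (g2 t) ω) ^ a ∂μ
      = (∫ ω, f (g1 t) ω ^ a ∂μ) * ∫ ω, f (g2 t) ω ^ a ∂μ := by
    intro t a
    have e : ∀ ω, (f (g1 t) ω * f (g2 t) ω) ^ a = f (g1 t) ω ^ a * f (g2 t) ω ^ a :=
      fun ω => mul_pow _ _ _
    rw [integral_congr_ae (Filter.Eventually.of_forall e)]
    exact (hppow t a a).integral_mul_eq_mul_integral (haesm _ a) (haesm _ a)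
  refine slln4 (Y := fun t ω => f (g1 t) ω * f (g2 t) ω) (B := γB ^ 2) (C := γC ^ 2)
    ?_ ?_ ?_ ?_ ?_
  · intro t
    apply memLp_four_of_integrable_pow (((hfm _).mul (hfm _)).aestronglyMeasurable)
    have h := (hppow t 4 4).integrable_mul (hint _ 4 le_rfl) (hint _ 4 le_rfl)
    exact h.congr (Filter.Eventually.of_forall fun ω => by simp [mul_pow])
  · intro T
    apply indepFun_sum_of_disjoint_atoms hf hfm _ (fun t => {g1 t, g2 t})
    · intro s t hst
      rw [Finset.disjoint_left]
      intro x hx hx'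
      simp only [Finset.mem_insert, Finset.mem_singleton] at hx hx'
      rcases hx with rfl | rfl <;> rcases hx' with h | h
      · exact hst (hg1 h)
      · exact h12 s t h
      · exact h12 t s h.symm
      · exact hst (hg2 h)
    · intro t
      refine ⟨fun h => h ⟨g1 t, by simp⟩ * h ⟨g2 t, by simp⟩, ?_, fun ω => rfl⟩
      exact (measurable_pi_apply _).mul (measurable_pi_apply _)
  · intro t
    have h := (hpair t).integral_mul_eq_mul_integral (hfm _).aestronglyMeasurable (hfm _).aestronglyMeasurable
    have h' : ∫ ω, f (g1 t) ω * f (g2 t) ω ∂μ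
        = (∫ ω, f (g1 t) ω ∂μ) * ∫ ω, f (g2 t) ω ∂μ := h
    rw [h', hmean (g1 t), zero_mul]
  · intro t
    rw [hmoment t 2, h2, h2]
    exact le_of_eq (sq γB).symm
  · intro t
    rw [hmoment t 4, h4, h4]
    have : γC * γC = γC ^ 2 := (sq γC).symm
    linarith

end Aux

/-- Section IV-B: almost-sure consistency of the instrumental-variable matrices. -/
theorem stmt_15 {Ω : Type*} [MeasurableSpace Ω] (μ : Measure Ω) [IsProbabilityMeasure μ]
    (n m : ℕ) (σ : ℝ) (hσ : 0 < σ)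
    (u : ℕ → Fin m → ℝ) (xo : ℕ → Fin n → ℝ)
    -- the two (jointly independent) noise families
    (v vt : ℕ → Ω → Fin n → ℝ)
    (hmeas : ∀ t i, Measurable fun ω => v t ω i)
    (hmeas' : ∀ t i, Measurable fun ω => vt t ω i)
    (hindep : iIndepFun
      (fun (p : (ℕ ⊕ ℕ) × Fin n) ω => Sum.elim (fun t => v t ω p.2) (fun t => vt t ω p.2) p.1) μ)
    (hdist : ∀ t i, Measure.map (fun ω => v t ω i) μ
      = gaussianReal 0 ⟨σ ^ 2, sq_nonneg σ⟩)
    (hdist' : ∀ t i, Measure.map (fun ω => vt t ω i) μ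
      = gaussianReal 0 ⟨σ ^ 2, sq_nonneg σ⟩)
    (Cu Cx : ℝ) (hu : ∀ t, ‖u t‖ ≤ Cu) (hx : ∀ t, ‖xo t‖ ≤ Cx)
    -- `X̄₀ⁱᵛ(T) = (1/T)·X₀(T)·(Φⁱᵛ(T))ᵀ` and `X̄₁ⁱᵛ(T) = (1/T)·X₁(T)·(Φⁱᵛ(T))ᵀ`
    (X₀ivbar X₁ivbar : ℕ → Ω → Matrix (Fin n) (Fin m ⊕ Fin n) ℝ)
    (hX₀ivbar : ∀ T ω, X₀ivbar T ω =
      (T : ℝ)⁻¹ • (colMat (fun t => xo t + v t ω) T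
        * (fromRows (colMat u T) (colMat (fun t => xo t + vt t ω) T))ᵀ))
    (hX₁ivbar : ∀ T ω, X₁ivbar T ω =
      (T : ℝ)⁻¹ • (colMat (fun t => xo (t + 1) + v (t + 1) ω) T
        * (fromRows (colMat u T) (colMat (fun t => xo t + vt t ω) T))ᵀ))
    -- noise-free matrices `X̄₀ᵒ(T)` and `X̄₁ᵒ(T)`
    (X₀obar X₁obar : ℕ → Matrix (Fin n) (Fin m ⊕ Fin n) ℝ)
    (hX₀obar : ∀ T, X₀obar T
      = (T : ℝ)⁻¹ • (colMat xo T * (fromRows (colMat u T) (colMat xo T))ᵀ))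
    (hX₁obar : ∀ T, X₁obar T
      = (T : ℝ)⁻¹ • (colMat (fun t => xo (t + 1)) T
          * (fromRows (colMat u T) (colMat xo T))ᵀ)) :
    ∀ᵐ ω ∂μ,
      Tendsto (fun T : ℕ => X₀ivbar T ω - X₀obar T) atTop
        (nhds (0 : Matrix (Fin n) (Fin m ⊕ Fin n) ℝ)) ∧
      Tendsto (fun T : ℕ => X₁ivbar T ω - X₁obar T) atTop
        (nhds (0 : Matrix (Fin n) (Fin m ⊕ Fin n) ℝ)) := by
  classical
  set W : (ℕ ⊕ ℕ) × Fin n → Ω → ℝ :=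
    fun p ω => Sum.elim (fun t => v t ω p.2) (fun t => vt t ω p.2) p.1 with hW
  have hWm : ∀ p, Measurable (W p) := by
    rintro ⟨(t | t), i⟩
    · exact hmeas t i
    · exact hmeas' t i
  have hWdist : ∀ p, Measure.map (W p) μ = gaussianReal 0 ⟨σ ^ 2, sq_nonneg σ⟩ := by
    rintro ⟨(t | t), i⟩
    · exact hdist t i
    · exact hdist' t i
  set γ : Measure ℝ := gaussianReal 0 ⟨σ ^ 2, sq_nonneg σ⟩ with hγ
  have hWmem : ∀ p, MemLp (W p) 4 μ := by
    intro p
    have hid : MemLp (fun x : ℝ => x) 4 γ :=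
      memLp_four_of_integrable_pow aestronglyMeasurable_id (gauss_integrable_pow hσ 4)
    have h0 : MemLp (fun x : ℝ => x) 4 (Measure.map (W p) μ) := by
      rw [hWdist p]; exact hid
    have h1 := (memLp_map_measure_iff aestronglyMeasurable_id (hWm p).aemeasurable).1 h0
    simpa [Function.comp] using h1
  have hWint : ∀ p (k : ℕ), ∫ ω, W p ω ^ k ∂μ = ∫ x, x ^ k ∂γ := by
    intro p k
    have h : ∫ x, x ^ k ∂(Measure.map (W p) μ) = ∫ ω, W p ω ^ k ∂μ :=
      integral_map (hWm p).aemeasurable ((measurable_id.pow_const k).aestronglyMeasurable)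
    rw [hWdist p] at h
    exact h.symm
  have hWmean : ∀ p, ∫ ω, W p ω ∂μ = 0 := by
    intro p
    have h1 := hWint p 1
    simp only [pow_one] at h1
    rw [h1, hγ]
    exact gauss_mean hσ
  have hW2 : ∀ p, ∫ ω, W p ω ^ 2 ∂μ = ∫ x, x ^ 2 ∂γ := fun p => hWint p 2
  have hW4 : ∀ p, ∫ ω, W p ω ^ 4 ∂μ = ∫ x, x ^ 4 ∂γ := fun p => hWint p 4
  -- index maps
  have hinjl : ∀ (s : ℕ) (i : Fin n),
      Function.Injective (fun t : ℕ => ((Sum.inl (t + s) : ℕ ⊕ ℕ), i)) := by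
    intro s i a b hab
    simp only [Prod.mk.injEq, Sum.inl.injEq] at hab
    omega
  have hinjr : ∀ (k : Fin n),
      Function.Injective (fun t : ℕ => ((Sum.inr t : ℕ ⊕ ℕ), k)) := by
    intro k a b hab
    simp only [Prod.mk.injEq, Sum.inr.injEq] at hab
    exact hab.1
  have hbu : ∀ (j : Fin m) (t : ℕ), |u t j| ≤ Cu := by
    intro j t
    rw [← Real.norm_eq_abs]
    exact (norm_le_pi_norm (u t) j).trans (hu t)
  have hbx : ∀ (i : Fin n) (t : ℕ), |xo t i| ≤ Cx := by
    intro i t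
    rw [← Real.norm_eq_abs]
    exact (norm_le_pi_norm (xo t) i).trans (hx t)
  -- the four families of almost-sure limits
  have H1 : ∀ᵐ ω ∂μ, ∀ (s : ℕ) (i : Fin n) (j : Fin m),
      Tendsto (fun T : ℕ => (T : ℝ)⁻¹ * ∑ t ∈ Finset.range T, u t j * v (t + s) ω i)
        atTop (nhds 0) := by
    rw [ae_all_iff]; intro s
    rw [ae_all_iff]; intro i
    rw [ae_all_iff]; intro j
    exact slln_weighted hindep hWm hWmem hWmean hW2 hW4 _ (hinjl s i)
      (fun t => u t j) Cu (fun t => hbu j t)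
  have H2 : ∀ᵐ ω ∂μ, ∀ (s : ℕ) (i k : Fin n),
      Tendsto (fun T : ℕ => (T : ℝ)⁻¹ * ∑ t ∈ Finset.range T, xo (t + s) i * vt t ω k)
        atTop (nhds 0) := by
    rw [ae_all_iff]; intro s
    rw [ae_all_iff]; intro i
    rw [ae_all_iff]; intro k
    exact slln_weighted hindep hWm hWmem hWmean hW2 hW4 _ (hinjr k)
      (fun t => xo (t + s) i) Cx (fun t => hbx i (t + s))
  have H3 : ∀ᵐ ω ∂μ, ∀ (s : ℕ) (i k : Fin n),
      Tendsto (fun T : ℕ => (T : ℝ)⁻¹ * ∑ t ∈ Finset.range T, xo t k * v (t + s) ω i)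
        atTop (nhds 0) := by
    rw [ae_all_iff]; intro s
    rw [ae_all_iff]; intro i
    rw [ae_all_iff]; intro k
    exact slln_weighted hindep hWm hWmem hWmean hW2 hW4 _ (hinjl s i)
      (fun t => xo t k) Cx (fun t => hbx k t)
  have H4 : ∀ᵐ ω ∂μ, ∀ (s : ℕ) (i k : Fin n),
      Tendsto (fun T : ℕ => (T : ℝ)⁻¹ * ∑ t ∈ Finset.range T, v (t + s) ω i * vt t ω k)
        atTop (nhds 0) := by
    rw [ae_all_iff]; intro s
    rw [ae_all_iff]; intro i
    rw [ae_all_iff]; intro k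
    exact slln_prod hindep hWm hWmem hWmean hW2 hW4
      (fun t : ℕ => ((Sum.inl (t + s) : ℕ ⊕ ℕ), i)) (fun t : ℕ => ((Sum.inr t : ℕ ⊕ ℕ), k))
      (hinjl s i) (hinjr k) (fun a b => by simp)
  filter_upwards [H1, H2, H3, H4] with ω h1 h2 h3 h4
  constructor
  · -- X₀ case
    refine tendsto_pi_nhds.2 ?_
    intro i
    rw [tendsto_pi_nhds]
    intro j
    have hzero : (0 : Matrix (Fin n) (Fin m ⊕ Fin n) ℝ) i j = 0 := rfl
    rw [hzero]
    rcases j with j | k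
    · -- inl column
      have e : (fun T : ℕ => (X₀ivbar T ω - X₀obar T) i (Sum.inl j))
          = fun T : ℕ => (T : ℝ)⁻¹ * ∑ t ∈ Finset.range T, u t j * v t ω i := by
        funext T
        rw [hX₀ivbar, hX₀obar]
        simp only [Matrix.sub_apply, Matrix.smul_apply, Matrix.mul_apply,
          Matrix.transpose_apply, Matrix.fromRows_apply_inl, colMat, Matrix.of_apply,
          Pi.add_apply, smul_eq_mul]
        rw [Fin.sum_univ_eq_sum_range (fun t => (xo t i + v t ω i) * u t j) T,
          Fin.sum_univ_eq_sum_range (fun t => xo t i * u t j) T,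
          ← mul_sub, ← Finset.sum_sub_distrib]
        congr 1
        exact Finset.sum_congr rfl fun t _ => by ring
      rw [e]
      have := h1 0 i j
      simpa using this
    · -- inr column
      have h2' := h2 0 i k
      have h3' := h3 0 i k
      have h4' := h4 0 i k
      simp only [add_zero] at h2' h3' h4'
      have e : (fun T : ℕ => (X₀ivbar T ω - X₀obar T) i (Sum.inr k))
          = fun T : ℕ =>
            ((T : ℝ)⁻¹ * ∑ t ∈ Finset.range T, xo t i * vt t ω k)
            + ((T : ℝ)⁻¹ * ∑ t ∈ Finset.range T, xo t k * v t ω i)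
            + ((T : ℝ)⁻¹ * ∑ t ∈ Finset.range T, v t ω i * vt t ω k) := by
        funext T
        rw [hX₀ivbar, hX₀obar]
        simp only [Matrix.sub_apply, Matrix.smul_apply, Matrix.mul_apply,
          Matrix.transpose_apply, Matrix.fromRows_apply_inr, colMat, Matrix.of_apply,
          Pi.add_apply, smul_eq_mul]
        rw [Fin.sum_univ_eq_sum_range
            (fun t => (xo t i + v t ω i) * (xo t k + vt t ω k)) T,
          Fin.sum_univ_eq_sum_range (fun t => xo t i * xo t k) T,
          ← mul_sub, ← Finset.sum_sub_distrib, ← mul_add, ← mul_add,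
          ← Finset.sum_add_distrib, ← Finset.sum_add_distrib]
        congr 1
        exact Finset.sum_congr rfl fun t _ => by ring
      rw [e]
      have := (h2'.add h3').add h4'
      simpa using this
  · -- X₁ case
    refine tendsto_pi_nhds.2 ?_
    intro i
    rw [tendsto_pi_nhds]
    intro j
    have hzero : (0 : Matrix (Fin n) (Fin m ⊕ Fin n) ℝ) i j = 0 := rfl
    rw [hzero]
    rcases j with j | k
    · have e : (fun T : ℕ => (X₁ivbar T ω - X₁obar T) i (Sum.inl j))
          = fun T : ℕ => (T : ℝ)⁻¹ * ∑ t ∈ Finset.range T, u t j * v (t + 1) ω i := by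
        funext T
        rw [hX₁ivbar, hX₁obar]
        simp only [Matrix.sub_apply, Matrix.smul_apply, Matrix.mul_apply,
          Matrix.transpose_apply, Matrix.fromRows_apply_inl, colMat, Matrix.of_apply,
          Pi.add_apply, smul_eq_mul]
        rw [Fin.sum_univ_eq_sum_range (fun t => (xo (t + 1) i + v (t + 1) ω i) * u t j) T,
          Fin.sum_univ_eq_sum_range (fun t => xo (t + 1) i * u t j) T,
          ← mul_sub, ← Finset.sum_sub_distrib]
        congr 1
        exact Finset.sum_congr rfl fun t _ => by ring
      rw [e]
      exact h1 1 i j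
    · have e : (fun T : ℕ => (X₁ivbar T ω - X₁obar T) i (Sum.inr k))
          = fun T : ℕ =>
            ((T : ℝ)⁻¹ * ∑ t ∈ Finset.range T, xo (t + 1) i * vt t ω k)
            + ((T : ℝ)⁻¹ * ∑ t ∈ Finset.range T, xo t k * v (t + 1) ω i)
            + ((T : ℝ)⁻¹ * ∑ t ∈ Finset.range T, v (t + 1) ω i * vt t ω k) := by
        funext T
        rw [hX₁ivbar, hX₁obar]
        simp only [Matrix.sub_apply, Matrix.smul_apply, Matrix.mul_apply,
          Matrix.transpose_apply, Matrix.fromRows_apply_inr, colMat, Matrix.of_apply,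
          Pi.add_apply, smul_eq_mul]
        rw [Fin.sum_univ_eq_sum_range
            (fun t => (xo (t + 1) i + v (t + 1) ω i) * (xo t k + vt t ω k)) T,
          Fin.sum_univ_eq_sum_range (fun t => xo (t + 1) i * xo t k) T,
          ← mul_sub, ← Finset.sum_sub_distrib, ← mul_add, ← mul_add,
          ← Finset.sum_add_distrib, ← Finset.sum_add_distrib]
        congr 1
        exact Finset.sum_congr rfl fun t _ => by ring
      rw [e]
      have := ((h2 1 i k).add (h3 1 i k)).add (h4 1 i k)
      simpa using this
end
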